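/- arXiv:2410.01749 — 5 statements merged into one kernel-verified Lean document; each statement's English description precedes it below -/
import Mathlib

section
/- Let x and x̄ be solutions of the stochastic difference equations x_{k+1} = b(k, x_k) + σ(k, x_k)·w_k, x_0 = η, and x̄_{k+1} = b̄(k, x̄_k) + σ̄(k, x̄_k)·w_k, x̄_0 = η̄, with coefficient sets (b, σ, η) and (b̄, σ̄, η̄) each satisfying the standing measurability, integrability, and uniform L-Lipschitz assumptions. Then E[Σ_{k=0}^N |x_k − x̄_k|²] ≤ C · E[ |η − η̄|² + Σ_{k=0}^{N-1} ( |b(k, x̄_k) − b̄(k, x̄_k)|² + |σ(k, x̄_k) − σ̄(k, x̄_k)|² ) ], where C depends only on N and L. -/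
open MeasureTheory

abbrev Vec (n : ℕ) := EuclideanSpace ℝ (Fin n)

/-- Measurability of a Carathéodory composition. -/
lemma meas_comp {n : ℕ} {Ω : Type} {m : MeasurableSpace Ω} {L : ℝ}
    {g : Ω → Vec n → Vec n} {f : Ω → Vec n}
    (hg : ∀ x, Measurable[m] (fun ω => g ω x))
    (hlip : ∀ ω x x', ‖g ω x - g ω x'‖ ≤ L * ‖x - x'‖)
    (hf : Measurable[m] f) :
    Measurable[m] (fun ω => g ω (f ω)) := by
  have hcont : ∀ ω, Continuous (fun x => g ω x) := by
    intro ω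
    have : LipschitzWith (Real.toNNReal L) (fun x => g ω x) := by
      refine LipschitzWith.of_dist_le_mul (fun x x' => ?_)
      rw [dist_eq_norm, dist_eq_norm]
      calc ‖g ω x - g ω x'‖ ≤ L * ‖x - x'‖ := hlip ω x x'
        _ ≤ (Real.toNNReal L : ℝ) * ‖x - x'‖ := by
            gcongr; exact Real.le_coe_toNNReal L
    exact this.continuous
  have huc : Measurable (Function.uncurry (fun x (ω : Ω) => g ω x)) :=
    measurable_uncurry_of_continuous_of_measurable hcont (fun i => hg i)
  have : (fun ω => g ω (f ω)) = (Function.uncurry (fun x (ω : Ω) => g ω x)) ∘ (fun ω => (f ω, ω)) := rfl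
  rw [this]
  exact huc.comp (hf.prodMk measurable_id)

lemma memLp_comp {n : ℕ} {Ω : Type} {m0 : MeasurableSpace Ω} {μ : Measure Ω} {L : ℝ}
    {g : Ω → Vec n → Vec n} {f : Ω → Vec n} (hL : 0 ≤ L)
    (hg0 : MemLp (fun ω => g ω 0) 2 μ)
    (hlip : ∀ ω x x', ‖g ω x - g ω x'‖ ≤ L * ‖x - x'‖)
    (hf : MemLp f 2 μ)
    (hmeas : AEStronglyMeasurable (fun ω => g ω (f ω)) μ) :
    MemLp (fun ω => g ω (f ω)) 2 μ := by
  have hdom : MemLp (fun ω => ‖g ω 0‖ + L * ‖f ω‖) 2 μ :=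
    hg0.norm.add ((hf.norm).const_mul L)
  refine hdom.of_le hmeas ?_
  refine Filter.Eventually.of_forall (fun ω => ?_)
  have h1 : ‖g ω (f ω)‖ ≤ ‖g ω 0‖ + L * ‖f ω‖ := by
    calc ‖g ω (f ω)‖ = ‖g ω 0 + (g ω (f ω) - g ω 0)‖ := by rw [add_sub_cancel]
      _ ≤ ‖g ω 0‖ + ‖g ω (f ω) - g ω 0‖ := norm_add_le _ _
      _ ≤ ‖g ω 0‖ + L * ‖f ω - 0‖ := by gcongr; exact hlip ω (f ω) 0
      _ = ‖g ω 0‖ + L * ‖f ω‖ := by rw [sub_zero]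
  refine h1.trans ?_
  exact le_abs_self _

section helpers
variable {n : ℕ} {Ω : Type} {m0 : MeasurableSpace Ω} {μ : Measure Ω}

lemma integrable_w_sq {G' : MeasurableSpace Ω} [IsProbabilityMeasure μ] {w : Ω → ℝ}
    (hw2 : μ[fun ω => w ω ^ 2 | G'] =ᵐ[μ] 1) : Integrable (fun ω => w ω ^ 2) μ := by
  by_contra h
  rw [condExp_of_not_integrable h] at hw2
  have : ∃ ω : Ω, (0 : Ω → ℝ) ω = (1 : Ω → ℝ) ω := by
    have hne : (MeasureTheory.ae μ).NeBot := ae_neBot.2 (IsProbabilityMeasure.ne_zero μ)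
    exact hw2.exists
  simp at this

lemma norm_sq_integrable {f : Ω → Vec n} (hf : MemLp f 2 μ) :
    Integrable (fun ω => ‖f ω‖ ^ 2) μ := hf.norm.integrable_sq

end helpers

section step
variable {n : ℕ} {Ω : Type} {m0 : MeasurableSpace Ω} {μ : Measure Ω} [IsProbabilityMeasure μ]

lemma step_est {G' : MeasurableSpace Ω} (hG' : G' ≤ m0) {L : ℝ} (hL : 0 < L)
    {w : Ω → ℝ}
    (hw2 : μ[fun ω => w ω ^ 2 | G'] =ᵐ[μ] 1)
    {bk σk bbk σbk : Ω → Vec n → Vec n}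
    (hbm : ∀ x, Measurable[G'] fun ω => bk ω x)
    (hσm : ∀ x, Measurable[G'] fun ω => σk ω x)
    (hbbm : ∀ x, Measurable[G'] fun ω => bbk ω x)
    (hσbm : ∀ x, Measurable[G'] fun ω => σbk ω x)
    (hb0 : MemLp (fun ω => bk ω 0) 2 μ) (hσ0 : MemLp (fun ω => σk ω 0) 2 μ)
    (hbb0 : MemLp (fun ω => bbk ω 0) 2 μ) (hσb0 : MemLp (fun ω => σbk ω 0) 2 μ)
    (hblip : ∀ ω x x', ‖bk ω x - bk ω x'‖ ≤ L * ‖x - x'‖)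
    (hσlip : ∀ ω x x', ‖σk ω x - σk ω x'‖ ≤ L * ‖x - x'‖)
    (hbblip : ∀ ω x x', ‖bbk ω x - bbk ω x'‖ ≤ L * ‖x - x'‖)
    (hσblip : ∀ ω x x', ‖σbk ω x - σbk ω x'‖ ≤ L * ‖x - x'‖)
    {xk xbk xk1 xbk1 : Ω → Vec n}
    (hxm : Measurable[G'] xk) (hxL : MemLp xk 2 μ)
    (hxbm : Measurable[G'] xbk) (hxbL : MemLp xbk 2 μ)
    (hx1L : MemLp xk1 2 μ) (hxb1L : MemLp xbk1 2 μ)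
    (hdyn : ∀ᵐ ω ∂μ, xk1 ω = bk ω (xk ω) + w ω • σk ω (xk ω))
    (hdynb : ∀ᵐ ω ∂μ, xbk1 ω = bbk ω (xbk ω) + w ω • σbk ω (xbk ω)) :
    ∫ ω, ‖xk1 ω - xbk1 ω‖ ^ 2 ∂μ ≤
      8 * L ^ 2 * ∫ ω, ‖xk ω - xbk ω‖ ^ 2 ∂μ +
      4 * ∫ ω, (‖bk ω (xbk ω) - bbk ω (xbk ω)‖ ^ 2 +
                ‖σk ω (xbk ω) - σbk ω (xbk ω)‖ ^ 2) ∂μ := by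
  -- measurability of compositions
  have hbx : Measurable[G'] fun ω => bk ω (xk ω) := meas_comp hbm hblip hxm
  have hσx : Measurable[G'] fun ω => σk ω (xk ω) := meas_comp hσm hσlip hxm
  have hbxb : Measurable[G'] fun ω => bk ω (xbk ω) := meas_comp hbm hblip hxbm
  have hσxb : Measurable[G'] fun ω => σk ω (xbk ω) := meas_comp hσm hσlip hxbm
  have hbbxb : Measurable[G'] fun ω => bbk ω (xbk ω) := meas_comp hbbm hbblip hxbm
  have hσbxb : Measurable[G'] fun ω => σbk ω (xbk ω) := meas_comp hσbm hσblip hxbm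
  have asm : ∀ {f : Ω → Vec n}, Measurable[G'] f → @AEStronglyMeasurable _ _ _ m0 m0 f μ :=
    fun hf => (hf.mono hG' le_rfl).aestronglyMeasurable
  -- L² of compositions
  have hbxL : MemLp (fun ω => bk ω (xk ω)) 2 μ := memLp_comp hL.le hb0 hblip hxL (asm hbx)
  have hσxL : MemLp (fun ω => σk ω (xk ω)) 2 μ := memLp_comp hL.le hσ0 hσlip hxL (asm hσx)
  have hbxbL : MemLp (fun ω => bk ω (xbk ω)) 2 μ := memLp_comp hL.le hb0 hblip hxbL (asm hbxb)
  have hσxbL : MemLp (fun ω => σk ω (xbk ω)) 2 μ := memLp_comp hL.le hσ0 hσlip hxbL (asm hσxb)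
  have hbbxbL : MemLp (fun ω => bbk ω (xbk ω)) 2 μ := memLp_comp hL.le hbb0 hbblip hxbL (asm hbbxb)
  have hσbxbL : MemLp (fun ω => σbk ω (xbk ω)) 2 μ := memLp_comp hL.le hσb0 hσblip hxbL (asm hσbxb)
  set A : Ω → Vec n := fun ω => bk ω (xk ω) - bbk ω (xbk ω) with hA_def
  set B : Ω → Vec n := fun ω => σk ω (xk ω) - σbk ω (xbk ω) with hB_def
  have hAL : MemLp A 2 μ := hbxL.sub hbbxbL
  have hBL : MemLp B 2 μ := hσxL.sub hσbxbL
  have hBm : Measurable[G'] B := hσx.sub hσbxb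
  have hAsq : Integrable (fun ω => ‖A ω‖ ^ 2) μ := norm_sq_integrable hAL
  have hBsq : Integrable (fun ω => ‖B ω‖ ^ 2) μ := norm_sq_integrable hBL
  have he1L : MemLp (fun ω => xk1 ω - xbk1 ω) 2 μ := hx1L.sub hxb1L
  have hae : ∀ᵐ ω ∂μ, xk1 ω - xbk1 ω = A ω + w ω • B ω := by
    filter_upwards [hdyn, hdynb] with ω h1 h2
    rw [h1, h2]
    simp only [hA_def, hB_def, smul_sub]
    abel
  have hwB_int : Integrable (fun ω => ‖B ω‖ ^ 2 * w ω ^ 2) μ := by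
    have h2 : MemLp (fun ω => w ω • B ω) 2 μ := by
      refine (he1L.sub hAL).ae_eq ?_
      filter_upwards [hae] with ω h
      show xk1 ω - xbk1 ω - A ω = w ω • B ω
      rw [h]; abel
    have h3 := norm_sq_integrable h2
    refine h3.congr (Filter.Eventually.of_forall fun ω => ?_)
    show ‖w ω • B ω‖ ^ 2 = ‖B ω‖ ^ 2 * w ω ^ 2
    rw [norm_smul, Real.norm_eq_abs, mul_pow, sq_abs]
    ring
  have hw2int : Integrable (fun ω => w ω ^ 2) μ := integrable_w_sq hw2
  -- pull-out property
  have hint_eq : ∫ ω, ‖B ω‖ ^ 2 * w ω ^ 2 ∂μ = ∫ ω, ‖B ω‖ ^ 2 ∂μ := by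
    have hBsm : StronglyMeasurable[G'] fun ω => ‖B ω‖ ^ 2 :=
      (hBm.norm.pow_const 2).stronglyMeasurable
    have hpull := condExp_mul_of_stronglyMeasurable_left (μ := μ) hBsm
      (by simpa [Pi.mul_def] using hwB_int) hw2int
    rw [← integral_condExp (f := fun ω => ‖B ω‖ ^ 2 * w ω ^ 2) (μ := μ) hG']
    refine integral_congr_ae ?_
    have : (fun ω => ‖B ω‖ ^ 2) * μ[fun ω => w ω ^ 2|G'] =ᵐ[μ]
        fun ω => ‖B ω‖ ^ 2 := by
      filter_upwards [hw2] with ω hω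
      simp [Pi.mul_apply, hω]
    calc μ[(fun ω => ‖B ω‖ ^ 2 * w ω ^ 2)|G']
        =ᵐ[μ] (fun ω => ‖B ω‖ ^ 2) * μ[fun ω => w ω ^ 2|G'] := by
          simpa [Pi.mul_def] using hpull
      _ =ᵐ[μ] fun ω => ‖B ω‖ ^ 2 := this
  -- first bound
  have hstep1 : ∫ ω, ‖xk1 ω - xbk1 ω‖ ^ 2 ∂μ ≤
      2 * ∫ ω, ‖A ω‖ ^ 2 ∂μ + 2 * ∫ ω, ‖B ω‖ ^ 2 ∂μ := by
    have hRint : Integrable (fun ω => 2 * ‖A ω‖ ^ 2 + 2 * (‖B ω‖ ^ 2 * w ω ^ 2)) μ :=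
      (hAsq.const_mul 2).add (hwB_int.const_mul 2)
    have hmono : ∫ ω, ‖xk1 ω - xbk1 ω‖ ^ 2 ∂μ ≤
        ∫ ω, (2 * ‖A ω‖ ^ 2 + 2 * (‖B ω‖ ^ 2 * w ω ^ 2)) ∂μ := by
      refine integral_mono_ae (norm_sq_integrable he1L) hRint ?_
      filter_upwards [hae] with ω h
      rw [h]
      have h1 : ‖A ω + w ω • B ω‖ ≤ ‖A ω‖ + |w ω| * ‖B ω‖ := by
        refine (norm_add_le _ _).trans ?_
        rw [norm_smul, Real.norm_eq_abs]
      nlinarith [norm_nonneg (A ω), norm_nonneg (B ω), abs_nonneg (w ω),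
        sq_nonneg (‖A ω‖ - |w ω| * ‖B ω‖), norm_nonneg (A ω + w ω • B ω), sq_abs (w ω)]
    calc ∫ ω, ‖xk1 ω - xbk1 ω‖ ^ 2 ∂μ
        ≤ ∫ ω, (2 * ‖A ω‖ ^ 2 + 2 * (‖B ω‖ ^ 2 * w ω ^ 2)) ∂μ := hmono
      _ = 2 * ∫ ω, ‖A ω‖ ^ 2 ∂μ + 2 * ∫ ω, ‖B ω‖ ^ 2 * w ω ^ 2 ∂μ := by
          rw [integral_add (hAsq.const_mul 2) (hwB_int.const_mul 2),
            integral_const_mul, integral_const_mul]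
      _ = 2 * ∫ ω, ‖A ω‖ ^ 2 ∂μ + 2 * ∫ ω, ‖B ω‖ ^ 2 ∂μ := by rw [hint_eq]
  -- bound A and B by Lipschitz + defect
  have hek : Integrable (fun ω => ‖xk ω - xbk ω‖ ^ 2) μ := norm_sq_integrable (hxL.sub hxbL)
  have hdb : Integrable (fun ω => ‖bk ω (xbk ω) - bbk ω (xbk ω)‖ ^ 2) μ :=
    norm_sq_integrable (hbxbL.sub hbbxbL)
  have hdσ : Integrable (fun ω => ‖σk ω (xbk ω) - σbk ω (xbk ω)‖ ^ 2) μ :=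
    norm_sq_integrable (hσxbL.sub hσbxbL)
  have hAbnd : ∫ ω, ‖A ω‖ ^ 2 ∂μ ≤ 2 * L ^ 2 * ∫ ω, ‖xk ω - xbk ω‖ ^ 2 ∂μ
      + 2 * ∫ ω, ‖bk ω (xbk ω) - bbk ω (xbk ω)‖ ^ 2 ∂μ := by
    have : ∫ ω, ‖A ω‖ ^ 2 ∂μ ≤
        ∫ ω, (2 * L ^ 2 * ‖xk ω - xbk ω‖ ^ 2
          + 2 * ‖bk ω (xbk ω) - bbk ω (xbk ω)‖ ^ 2) ∂μ := by
      refine integral_mono_ae hAsq ((hek.const_mul _).add (hdb.const_mul 2))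
        (Filter.Eventually.of_forall fun ω => ?_)
      have h1 : ‖A ω‖ ≤ L * ‖xk ω - xbk ω‖ + ‖bk ω (xbk ω) - bbk ω (xbk ω)‖ := by
        have : A ω = (bk ω (xk ω) - bk ω (xbk ω)) + (bk ω (xbk ω) - bbk ω (xbk ω)) := by
          simp only [hA_def]; abel
        rw [this]
        exact (norm_add_le _ _).trans (by gcongr; exact hblip ω _ _)
      show ‖A ω‖ ^ 2 ≤ 2 * L ^ 2 * ‖xk ω - xbk ω‖ ^ 2 + 2 * ‖bk ω (xbk ω) - bbk ω (xbk ω)‖ ^ 2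
      have h2 : ‖A ω‖ ^ 2 ≤ (L * ‖xk ω - xbk ω‖ + ‖bk ω (xbk ω) - bbk ω (xbk ω)‖) ^ 2 :=
        pow_le_pow_left₀ (norm_nonneg _) h1 2
      nlinarith [h2, sq_nonneg (L * ‖xk ω - xbk ω‖ - ‖bk ω (xbk ω) - bbk ω (xbk ω)‖)]
    calc ∫ ω, ‖A ω‖ ^ 2 ∂μ ≤ _ := this
      _ = 2 * L ^ 2 * ∫ ω, ‖xk ω - xbk ω‖ ^ 2 ∂μ
          + 2 * ∫ ω, ‖bk ω (xbk ω) - bbk ω (xbk ω)‖ ^ 2 ∂μ := by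
          rw [integral_add (hek.const_mul _) (hdb.const_mul 2),
            integral_const_mul, integral_const_mul]
  have hBbnd : ∫ ω, ‖B ω‖ ^ 2 ∂μ ≤ 2 * L ^ 2 * ∫ ω, ‖xk ω - xbk ω‖ ^ 2 ∂μ
      + 2 * ∫ ω, ‖σk ω (xbk ω) - σbk ω (xbk ω)‖ ^ 2 ∂μ := by
    have : ∫ ω, ‖B ω‖ ^ 2 ∂μ ≤
        ∫ ω, (2 * L ^ 2 * ‖xk ω - xbk ω‖ ^ 2
          + 2 * ‖σk ω (xbk ω) - σbk ω (xbk ω)‖ ^ 2) ∂μ := by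
      refine integral_mono_ae hBsq ((hek.const_mul _).add (hdσ.const_mul 2))
        (Filter.Eventually.of_forall fun ω => ?_)
      have h1 : ‖B ω‖ ≤ L * ‖xk ω - xbk ω‖ + ‖σk ω (xbk ω) - σbk ω (xbk ω)‖ := by
        have : B ω = (σk ω (xk ω) - σk ω (xbk ω)) + (σk ω (xbk ω) - σbk ω (xbk ω)) := by
          simp only [hB_def]; abel
        rw [this]
        exact (norm_add_le _ _).trans (by gcongr; exact hσlip ω _ _)
      show ‖B ω‖ ^ 2 ≤ 2 * L ^ 2 * ‖xk ω - xbk ω‖ ^ 2 + 2 * ‖σk ω (xbk ω) - σbk ω (xbk ω)‖ ^ 2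
      have h2 : ‖B ω‖ ^ 2 ≤ (L * ‖xk ω - xbk ω‖ + ‖σk ω (xbk ω) - σbk ω (xbk ω)‖) ^ 2 :=
        pow_le_pow_left₀ (norm_nonneg _) h1 2
      nlinarith [h2, sq_nonneg (L * ‖xk ω - xbk ω‖ - ‖σk ω (xbk ω) - σbk ω (xbk ω)‖)]
    calc ∫ ω, ‖B ω‖ ^ 2 ∂μ ≤ _ := this
      _ = 2 * L ^ 2 * ∫ ω, ‖xk ω - xbk ω‖ ^ 2 ∂μ
          + 2 * ∫ ω, ‖σk ω (xbk ω) - σbk ω (xbk ω)‖ ^ 2 ∂μ := by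
          rw [integral_add (hek.const_mul _) (hdσ.const_mul 2),
            integral_const_mul, integral_const_mul]
  have hsplit : ∫ ω, (‖bk ω (xbk ω) - bbk ω (xbk ω)‖ ^ 2 +
      ‖σk ω (xbk ω) - σbk ω (xbk ω)‖ ^ 2) ∂μ =
      ∫ ω, ‖bk ω (xbk ω) - bbk ω (xbk ω)‖ ^ 2 ∂μ +
      ∫ ω, ‖σk ω (xbk ω) - σbk ω (xbk ω)‖ ^ 2 ∂μ := integral_add hdb hdσ
  rw [hsplit]
  linarith

end step


noncomputable def cSeq (L : ℝ) : ℕ → ℝ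
  | 0 => 1
  | k + 1 => 8 * L ^ 2 * cSeq L k + 4

lemma cSeq_pos (L : ℝ) : ∀ k, 0 < cSeq L k := by
  intro k
  induction k with
  | zero => norm_num [cSeq]
  | succ k ih =>
    have : 0 ≤ 8 * L ^ 2 * cSeq L k := by positivity
    simp only [cSeq]; linarith

set_option maxHeartbeats 1000000 in
/-- stability estimate for two SΔEs
`x_{k+1} = b(k,x_k) + σ(k,x_k) w_k, x_0 = η` and
`x̄_{k+1} = b̄(k,x̄_k) + σ̄(k,x̄_k) w_k, x̄_0 = η̄`, both coefficient sets satisfying the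
standing measurability, integrability and uniform `L`-Lipschitz assumptions;
the constant `C` depends only on `N` and `L`.  As before `G k` plays the role of
`F_{k-1}`. -/
theorem stmt4 (n N : ℕ) (L : ℝ) (hL : 0 < L) :
    ∃ C : ℝ, 0 < C ∧
      ∀ (Ω : Type) [m0 : MeasurableSpace Ω] (μ : Measure Ω) [IsProbabilityMeasure μ]
        (G : ℕ → MeasurableSpace Ω), Monotone G → (∀ k, G k ≤ m0) →
      ∀ (w : ℕ → Ω → ℝ),
        (∀ k, Measurable[G (k + 1)] (w k)) →
        (∀ k, μ[w k | G k] =ᵐ[μ] 0) →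
        (∀ k, μ[fun ω => w k ω ^ 2 | G k] =ᵐ[μ] 1) →
      ∀ (b σ bb σb : ℕ → Ω → Vec n → Vec n),
        (∀ k x, Measurable[G k] (fun ω => b k ω x)) →
        (∀ k x, Measurable[G k] (fun ω => σ k ω x)) →
        (∀ k x, Measurable[G k] (fun ω => bb k ω x)) →
        (∀ k x, Measurable[G k] (fun ω => σb k ω x)) →
        (∀ k, MemLp (fun ω => b k ω 0) 2 μ) →
        (∀ k, MemLp (fun ω => σ k ω 0) 2 μ) →
        (∀ k, MemLp (fun ω => bb k ω 0) 2 μ) →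
        (∀ k, MemLp (fun ω => σb k ω 0) 2 μ) →
        (∀ k ω x x', ‖b k ω x - b k ω x'‖ ≤ L * ‖x - x'‖) →
        (∀ k ω x x', ‖σ k ω x - σ k ω x'‖ ≤ L * ‖x - x'‖) →
        (∀ k ω x x', ‖bb k ω x - bb k ω x'‖ ≤ L * ‖x - x'‖) →
        (∀ k ω x x', ‖σb k ω x - σb k ω x'‖ ≤ L * ‖x - x'‖) →
      ∀ (η ηb : Vec n),
      ∀ (x xb : ℕ → Ω → Vec n),
        (∀ k, k ≤ N → Measurable[G k] (x k)) → (∀ k, k ≤ N → MemLp (x k) 2 μ) →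
        (x 0 = fun _ => η) →
        (∀ k, k < N → ∀ᵐ ω ∂μ, x (k + 1) ω = b k ω (x k ω) + w k ω • σ k ω (x k ω)) →
        (∀ k, k ≤ N → Measurable[G k] (xb k)) → (∀ k, k ≤ N → MemLp (xb k) 2 μ) →
        (xb 0 = fun _ => ηb) →
        (∀ k, k < N → ∀ᵐ ω ∂μ, xb (k + 1) ω = bb k ω (xb k ω) + w k ω • σb k ω (xb k ω)) →
        ∑ k ∈ Finset.range (N + 1), ∫ ω, ‖x k ω - xb k ω‖ ^ 2 ∂μ ≤
          C * (‖η - ηb‖ ^ 2 +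
            ∑ k ∈ Finset.range N,
              ∫ ω, (‖b k ω (xb k ω) - bb k ω (xb k ω)‖ ^ 2 +
                    ‖σ k ω (xb k ω) - σb k ω (xb k ω)‖ ^ 2) ∂μ) := by
  refine ⟨∑ k ∈ Finset.range (N + 1), cSeq L k, ?_, ?_⟩
  · exact Finset.sum_pos (fun k _ => cSeq_pos L k) (Finset.nonempty_range_iff.2 (Nat.succ_ne_zero N))
  intro Ω m0 μ _ G _hGmono hGle w _hwm _hw1 hw2 b σ bb σb hbm hσm hbbm hσbm hb0 hσ0 hbb0 hσb0
    hblip hσlip hbblip hσblip η ηb x xb hxm hxL hx0 hdyn hxbm hxbL hxb0 hdynb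
  set Ek : ℕ → ℝ := fun k => ∫ ω, ‖x k ω - xb k ω‖ ^ 2 ∂μ with hEk
  set Dk : ℕ → ℝ := fun k => ∫ ω, (‖b k ω (xb k ω) - bb k ω (xb k ω)‖ ^ 2 +
      ‖σ k ω (xb k ω) - σb k ω (xb k ω)‖ ^ 2) ∂μ with hDk
  set S : ℝ := ∑ k ∈ Finset.range N, Dk k with hS
  have hDnn : ∀ k, 0 ≤ Dk k := fun k => integral_nonneg (fun ω => by positivity)
  have hEnn : ∀ k, 0 ≤ Ek k := fun k => integral_nonneg (fun ω => by positivity)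
  have hSnn : 0 ≤ S := Finset.sum_nonneg (fun k _ => hDnn k)
  have hE0 : Ek 0 = ‖η - ηb‖ ^ 2 := by
    simp [hEk, hx0, hxb0, integral_const]
  have hstep : ∀ k, k < N → Ek (k + 1) ≤ 8 * L ^ 2 * Ek k + 4 * Dk k := by
    intro k hk
    exact step_est (hGle k) hL (hw2 k) (hbm k) (hσm k) (hbbm k) (hσbm k)
      (hb0 k) (hσ0 k) (hbb0 k) (hσb0 k) (hblip k) (hσlip k) (hbblip k) (hσblip k)
      (hxm k hk.le) (hxL k hk.le) (hxbm k hk.le) (hxbL k hk.le)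
      (hxL (k + 1) hk) (hxbL (k + 1) hk) (hdyn k hk) (hdynb k hk)
  have key : ∀ k, k ≤ N → Ek k ≤ cSeq L k * (‖η - ηb‖ ^ 2 + S) := by
    intro k
    induction k with
    | zero =>
      intro _
      rw [hE0]
      simp only [cSeq, one_mul]
      linarith
    | succ k ih =>
      intro hk
      have hkN : k < N := hk
      have hDle : Dk k ≤ S := by
        rw [hS]
        exact Finset.single_le_sum (fun j _ => hDnn j) (Finset.mem_range.2 hkN)
      have h1 := hstep k hkN
      have h2 := ih hkN.le
      have h8 : (0 : ℝ) ≤ 8 * L ^ 2 := by positivity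
      have h3 : 8 * L ^ 2 * Ek k ≤ 8 * L ^ 2 * (cSeq L k * (‖η - ηb‖ ^ 2 + S)) :=
        mul_le_mul_of_nonneg_left h2 h8
      have h4 : Dk k ≤ ‖η - ηb‖ ^ 2 + S :=
        hDle.trans (le_add_of_nonneg_left (sq_nonneg _))
      have h5 : cSeq L (k + 1) * (‖η - ηb‖ ^ 2 + S) =
          8 * L ^ 2 * (cSeq L k * (‖η - ηb‖ ^ 2 + S)) + 4 * (‖η - ηb‖ ^ 2 + S) := by
        simp only [cSeq]; ring
      rw [h5]
      linarith
  calc ∑ k ∈ Finset.range (N + 1), Ek k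
      ≤ ∑ k ∈ Finset.range (N + 1), cSeq L k * (‖η - ηb‖ ^ 2 + S) := by
        refine Finset.sum_le_sum (fun k hk => key k ?_)
        exact Nat.lt_succ_iff.1 (Finset.mem_range.1 hk)
    _ = (∑ k ∈ Finset.range (N + 1), cSeq L k) * (‖η - ηb‖ ^ 2 + S) := by
        rw [Finset.sum_mul]
end

section
/- Consider the backward stochastic difference equation y_k = f(k+1, y'_{k+1}, z'_{k+1}) for k = 0,…,N−1 with terminal condition y_N = ξ, where y'_{k+1} = E[y_{k+1} | F_{k-1}] and z'_{k+1} = E[y_{k+1} w_k | F_{k-1}]. Under the assumptions that ξ ∈ L²(F_{N-1}; ℝⁿ), f(k+1, y', z') is F_{k-1}-measurable for each (y', z'), f(·,0,0) is square-integrable, and f is uniformly L-Lipschitz in (y', z'), the BSΔE admits a unique adapted square-integrable solution (y_k)_{k=0}^N, and E[Σ_{k=0}^N |y_k|²] ≤ C ( E|ξ|² + E[Σ_{k=0}^{N-1} |f(k+1, 0, 0)|²] ) with C depending only on N and L. -/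
open MeasureTheory

section Helpers

variable {Ω : Type*} {m m0 : MeasurableSpace Ω} {μ : Measure Ω}

private lemma quad_aux {A B C : ℝ} (hA : 0 ≤ A)
    (h : ∀ q : ℚ, 0 ≤ A * (q : ℝ) ^ 2 + 2 * B * q + C) : B ^ 2 ≤ A * C := by
  rcases hA.eq_or_lt with hA0 | hA0
  · have hB : B = 0 := by
      by_contra hB
      rcases lt_or_gt_of_ne hB with hBneg | hBpos
      · obtain ⟨q, hq⟩ := exists_rat_gt ((C + 1) / (2 * (-B)))
        have := h q
        rw [← hA0] at this
        have h2 : (C + 1) / (2 * (-B)) * (2 * (-B)) < q * (2 * (-B)) := by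
          apply mul_lt_mul_of_pos_right hq; nlinarith
        rw [div_mul_cancel₀] at h2; · nlinarith
        · nlinarith
      · obtain ⟨q, hq⟩ := exists_rat_lt ((-C - 1) / (2 * B))
        have := h q
        rw [← hA0] at this
        have h2 : (q : ℝ) * (2 * B) < (-C - 1) / (2 * B) * (2 * B) := by
          apply mul_lt_mul_of_pos_right hq; nlinarith
        rw [div_mul_cancel₀] at h2; · nlinarith
        · nlinarith
    have hC : 0 ≤ C := by simpa [← hA0] using h 0
    nlinarith
  · by_contra hBC
    push_neg at hBC
    set D := B ^ 2 - A * C with hD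
    have hD0 : 0 < D := by nlinarith
    have hsq : Real.sqrt D ^ 2 = D := Real.sq_sqrt hD0.le
    have hs0 : 0 < Real.sqrt D := Real.sqrt_pos.mpr hD0
    obtain ⟨q, hq⟩ := exists_rat_near (-B / A) (div_pos hs0 hA0)
    have habs : |(q : ℝ) + B / A| < Real.sqrt D / A := by
      rw [abs_sub_comm] at hq
      calc |(q : ℝ) + B / A| = |(q : ℝ) - (-B / A)| := by ring_nf
        _ < _ := hq
    have h1 : ((q : ℝ) + B / A) ^ 2 < (Real.sqrt D / A) ^ 2 := by
      have := abs_lt.mp habs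
      nlinarith [abs_nonneg ((q:ℝ) + B / A)]
    have h2 : (A * q + B) ^ 2 < D := by
      have hA2 : (0:ℝ) < A ^ 2 := by positivity
      have : ((q : ℝ) + B / A) ^ 2 * A ^ 2 < (Real.sqrt D / A) ^ 2 * A ^ 2 :=
        mul_lt_mul_of_pos_right h1 hA2
      calc (A * q + B) ^ 2 = ((q : ℝ) + B / A) ^ 2 * A ^ 2 := by field_simp
        _ < (Real.sqrt D / A) ^ 2 * A ^ 2 := this
        _ = D := by field_simp [hsq]; exact hsq
    have := h q
    nlinarith

private lemma condexp_clm [IsFiniteMeasure μ] (hm : m ≤ m0)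
    {E F : Type*} [NormedAddCommGroup E] [NormedSpace ℝ E] [CompleteSpace E]
    [NormedAddCommGroup F] [NormedSpace ℝ F] [CompleteSpace F]
    (T : E →L[ℝ] F) {f : Ω → E} (hf : Integrable f μ) :
    (fun ω => T ((μ[f|m]) ω)) =ᵐ[μ] μ[fun ω => T (f ω)|m] := by
  refine ae_eq_condExp_of_forall_setIntegral_eq hm (T.integrable_comp hf)
    (fun s _ _ => (T.integrable_comp integrable_condExp).integrableOn)
    (fun s hs hμs => ?_) ?_
  · rw [T.integral_comp_comm integrable_condExp.integrableOn,
      setIntegral_condExp hm hf hs, T.integral_comp_comm hf.integrableOn]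
  · exact StronglyMeasurable.aestronglyMeasurable (T.continuous.comp_stronglyMeasurable stronglyMeasurable_condExp)

private lemma memLp_smul_integrable {n : ℕ} {w : Ω → ℝ} {y : Ω → Vec n}
    (hw : MemLp w 2 μ) (hy : MemLp y 2 μ) :
    Integrable (fun ω => w ω • y ω) μ := by
  rw [← memLp_one_iff_integrable]
  have := hy.smul (𝕜 := ℝ) hw (p := 2) (q := 2) (r := 1)
    (hpqr := ⟨by simp [ENNReal.inv_two_add_inv_two]⟩)
  exact this

private lemma memLp_mul_integrable {w Y : Ω → ℝ} (hw : MemLp w 2 μ) (hY : MemLp Y 2 μ) :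
    Integrable (fun ω => w ω * Y ω) μ := by
  rw [← memLp_one_iff_integrable]
  have := hY.smul (𝕜 := ℝ) hw (p := 2) (q := 2) (r := 1)
    (hpqr := ⟨by simp [ENNReal.inv_two_add_inv_two]⟩)
  exact this

private lemma cond_cs [IsFiniteMeasure μ] {w Y : Ω → ℝ}
    (hw : MemLp w 2 μ) (hY : MemLp Y 2 μ) {m : MeasurableSpace Ω} :
    ∀ᵐ ω ∂μ, (μ[fun ω' => w ω' * Y ω'|m]) ω ^ 2 ≤
      (μ[fun ω' => w ω' ^ 2|m]) ω * (μ[fun ω' => Y ω' ^ 2|m]) ω := by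
  have hw2 : Integrable (fun ω => w ω ^ 2) μ := hw.integrable_sq
  have hY2 : Integrable (fun ω => Y ω ^ 2) μ := hY.integrable_sq
  have hwY : Integrable (fun ω => w ω * Y ω) μ := memLp_mul_integrable hw hY
  have key : ∀ q : ℚ, ∀ᵐ ω ∂μ,
      0 ≤ (q:ℝ)^2 * (μ[fun ω' => w ω' ^ 2|m]) ω
        + 2 * q * (μ[fun ω' => w ω' * Y ω'|m]) ω + (μ[fun ω' => Y ω' ^ 2|m]) ω := by
    intro q
    have hnn : 0 ≤ᵐ[μ] μ[fun ω' => ((q:ℝ) * w ω' + Y ω') ^ 2|m] :=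
      condExp_nonneg (Filter.Eventually.of_forall fun ω => by positivity)
    have hsplit : μ[fun ω' => ((q:ℝ) * w ω' + Y ω') ^ 2|m] =ᵐ[μ]
        fun ω => (q:ℝ)^2 * (μ[fun ω' => w ω' ^ 2|m]) ω
          + 2 * q * (μ[fun ω' => w ω' * Y ω'|m]) ω + (μ[fun ω' => Y ω' ^ 2|m]) ω := by
      have heq : (fun ω' => ((q:ℝ) * w ω' + Y ω') ^ 2) =
          (fun ω' => ((q:ℝ)^2 • (fun ω'' => w ω'' ^ 2) + (2 * (q:ℝ)) • (fun ω'' => w ω'' * Y ω'')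
            + fun ω'' => Y ω'' ^ 2) ω') := by
        funext ω'; simp [smul_eq_mul]; ring
      rw [heq]
      calc μ[((q:ℝ)^2 • (fun ω'' => w ω'' ^ 2) + (2 * (q:ℝ)) • (fun ω'' => w ω'' * Y ω'')
            + fun ω'' => Y ω'' ^ 2)|m]
          =ᵐ[μ] μ[((q:ℝ)^2 • (fun ω'' => w ω'' ^ 2) + (2 * (q:ℝ)) • (fun ω'' => w ω'' * Y ω''))|m]
            + μ[fun ω'' => Y ω'' ^ 2|m] :=
            condExp_add ((hw2.smul ((q:ℝ)^2)).add (hwY.smul (2 * (q:ℝ)))) hY2 m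
        _ =ᵐ[μ] (μ[(q:ℝ)^2 • (fun ω'' => w ω'' ^ 2)|m] + μ[(2 * (q:ℝ)) • (fun ω'' => w ω'' * Y ω'')|m])
            + μ[fun ω'' => Y ω'' ^ 2|m] :=
            ((condExp_add (hw2.smul ((q:ℝ)^2)) (hwY.smul (2 * (q:ℝ))) m).add Filter.EventuallyEq.rfl)
        _ =ᵐ[μ] _ := by
            filter_upwards [condExp_smul (μ := μ) ((q:ℝ)^2) (fun ω'' => w ω'' ^ 2) (m := m),
              condExp_smul (μ := μ) (2 * (q:ℝ)) (fun ω'' => w ω'' * Y ω'') (m := m)] with ω h1 h2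
            simp only [Pi.add_apply, h1, h2, Pi.smul_apply, smul_eq_mul]
            try ring
    filter_upwards [hnn, hsplit] with ω h1 h2
    simp only [Pi.zero_apply] at h1
    rw [h2] at h1; linarith
  have hA : 0 ≤ᵐ[μ] μ[fun ω' => w ω' ^ 2|m] :=
    condExp_nonneg (Filter.Eventually.of_forall fun ω => by positivity)
  rw [← ae_all_iff] at key
  filter_upwards [key, hA] with ω hq hA0
  simp only [Pi.zero_apply] at hA0
  exact quad_aux hA0 (fun q => by nlinarith [hq q])

private lemma norm_sq_eq_sum {n : ℕ} (x : Vec n) : ‖x‖ ^ 2 = ∑ i, x i ^ 2 := by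
  rw [EuclideanSpace.norm_eq, Real.sq_sqrt (by positivity)]
  exact Finset.sum_congr rfl fun i _ => by rw [Real.norm_eq_abs, sq_abs]

private lemma cond_cs_vec [IsProbabilityMeasure μ] (hm : m ≤ m0) {n : ℕ} {w : Ω → ℝ}
    (hw : MemLp w 2 μ) (hw2 : μ[fun ω => w ω ^ 2|m] =ᵐ[μ] 1)
    {y : Ω → Vec n} (hy : MemLp y 2 μ) :
    ∀ᵐ ω ∂μ, ‖(μ[fun ω' => w ω' • y ω'|m]) ω‖ ^ 2 ≤ (μ[fun ω' => ‖y ω'‖ ^ 2|m]) ω := by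
  have hwy : Integrable (fun ω => w ω • y ω) μ := memLp_smul_integrable hw hy
  have hyi : ∀ i : Fin n, MemLp (fun ω => y ω i) 2 μ := fun i => by
    have := (EuclideanSpace.proj (𝕜 := ℝ) i).comp_memLp' hy
    exact this
  have hcoord : ∀ i : Fin n, (fun ω => (μ[fun ω' => w ω' • y ω'|m]) ω i) =ᵐ[μ]
      μ[fun ω' => w ω' * y ω' i|m] := fun i => by
    have := condexp_clm hm (EuclideanSpace.proj (𝕜 := ℝ) i) hwy
    simpa [smul_eq_mul] using this
  have hcs : ∀ i : Fin n, ∀ᵐ ω ∂μ, (μ[fun ω' => w ω' * y ω' i|m]) ω ^ 2 ≤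
      (μ[fun ω' => w ω' ^ 2|m]) ω * (μ[fun ω' => y ω' i ^ 2|m]) ω :=
    fun i => cond_cs hw (hyi i)
  have hsum : μ[fun ω' => ‖y ω'‖ ^ 2|m] =ᵐ[μ]
      fun ω => ∑ i, (μ[fun ω' => y ω' i ^ 2|m]) ω := by
    have h1 : (fun ω' => ‖y ω'‖ ^ 2) = fun ω' => ∑ i, y ω' i ^ 2 := by
      funext ω'; exact norm_sq_eq_sum (y ω')
    have h2 : (fun ω' => ∑ i, y ω' i ^ 2) = ∑ i : Fin n, fun ω' => y ω' i ^ 2 := by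
      funext ω'; simp
    rw [h1, h2]
    refine (condExp_finset_sum (fun i _ => (hyi i).integrable_sq) m).trans ?_
    exact Filter.Eventually.of_forall fun ω => by simp
  have hnn : ∀ i : Fin n, 0 ≤ᵐ[μ] μ[fun ω' => y ω' i ^ 2|m] := fun i =>
    condExp_nonneg (Filter.Eventually.of_forall fun ω => by positivity)
  filter_upwards [ae_all_iff.mpr hcoord, ae_all_iff.mpr hcs, ae_all_iff.mpr hnn, hsum, hw2]
    with ω h1 h2 h3 h4 h5
  calc ‖(μ[fun ω' => w ω' • y ω'|m]) ω‖ ^ 2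
      = ∑ i, ((μ[fun ω' => w ω' • y ω'|m]) ω i) ^ 2 := norm_sq_eq_sum _
    _ ≤ ∑ i, (μ[fun ω' => y ω' i ^ 2|m]) ω := by
        refine Finset.sum_le_sum fun i _ => ?_
        rw [h1 i]
        calc (μ[fun ω' => w ω' * y ω' i|m]) ω ^ 2
            ≤ (μ[fun ω' => w ω' ^ 2|m]) ω * (μ[fun ω' => y ω' i ^ 2|m]) ω := h2 i
          _ = (μ[fun ω' => y ω' i ^ 2|m]) ω := by rw [h5]; simp
    _ = (μ[fun ω' => ‖y ω'‖ ^ 2|m]) ω := h4.symm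

private lemma condexp_smul_sq_bound [IsProbabilityMeasure μ] (hm : m ≤ m0) {n : ℕ} {w : Ω → ℝ}
    (hw : MemLp w 2 μ) (hw2 : μ[fun ω => w ω ^ 2|m] =ᵐ[μ] 1)
    {y : Ω → Vec n} (hy : MemLp y 2 μ) :
    MemLp (μ[fun ω' => w ω' • y ω'|m]) 2 μ ∧
    ∫ ω, ‖(μ[fun ω' => w ω' • y ω'|m]) ω‖ ^ 2 ∂μ ≤ ∫ ω, ‖y ω‖ ^ 2 ∂μ := by
  set z := μ[fun ω' => w ω' • y ω'|m] with hz
  have hzsm : StronglyMeasurable z := stronglyMeasurable_condExp.mono hm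
  have hy2 : Integrable (fun ω => ‖y ω‖ ^ 2) μ :=
    (memLp_two_iff_integrable_sq_norm hy.aestronglyMeasurable).mp hy
  have hae := cond_cs_vec hm hw hw2 hy
  have hz2 : Integrable (fun ω => ‖z ω‖ ^ 2) μ := by
    refine (integrable_condExp (m := m) (f := fun ω' => ‖y ω'‖ ^ 2)).mono
      ((hzsm.norm.pow 2).aestronglyMeasurable) ?_
    filter_upwards [hae] with ω h
    rw [Real.norm_eq_abs, abs_of_nonneg (by positivity), Real.norm_eq_abs]
    exact h.trans (le_abs_self _)
  refine ⟨(memLp_two_iff_integrable_sq_norm hzsm.aestronglyMeasurable).mpr hz2, ?_⟩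
  calc ∫ ω, ‖z ω‖ ^ 2 ∂μ ≤ ∫ ω, (μ[fun ω' => ‖y ω'‖ ^ 2|m]) ω ∂μ :=
        integral_mono_ae hz2 integrable_condExp hae
    _ = ∫ ω, ‖y ω‖ ^ 2 ∂μ := integral_condExp hm

private lemma condexp_sq_bound [IsProbabilityMeasure μ] (hm : m ≤ m0) {n : ℕ}
    {y : Ω → Vec n} (hy : MemLp y 2 μ) :
    MemLp (μ[y|m]) 2 μ ∧
    ∫ ω, ‖(μ[y|m]) ω‖ ^ 2 ∂μ ≤ ∫ ω, ‖y ω‖ ^ 2 ∂μ := by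
  have h1 : (fun ω' => (fun _ : Ω => (1:ℝ)) ω' • y ω') = y := by
    funext ω'; simp
  have hw2 : μ[fun ω => (fun _ : Ω => (1:ℝ)) ω ^ 2|m] =ᵐ[μ] 1 := by
    simp only [one_pow]
    exact Filter.EventuallyEq.of_eq ((condExp_const hm (1:ℝ)).trans rfl)
  have := condexp_smul_sq_bound hm (memLp_const (1:ℝ)) hw2 hy
  rwa [h1] at this

private lemma w_memLp [IsProbabilityMeasure μ] {w : Ω → ℝ}
    (hwm : AEStronglyMeasurable w μ) {m : MeasurableSpace Ω}
    (hw2 : μ[fun ω => w ω ^ 2|m] =ᵐ[μ] 1) : MemLp w 2 μ := by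
  rw [memLp_two_iff_integrable_sq hwm]
  by_contra hint
  rw [condExp_of_not_integrable hint] at hw2
  obtain ⟨ω, hω⟩ := hw2.exists
  simp at hω

private lemma step_measurable {n : ℕ} {L : ℝ} {mΩ : MeasurableSpace Ω}
    {F : Ω → Vec n → Vec n → Vec n} (hL : 0 < L)
    (hmeas : ∀ a b, Measurable[mΩ] (fun ω => F ω a b))
    (hlip : ∀ ω a b a' b', ‖F ω a b - F ω a' b'‖ ≤ L * (‖a - a'‖ + ‖b - b'‖))
    {g h : Ω → Vec n} (hg : Measurable[mΩ] g) (hh : Measurable[mΩ] h) :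
    Measurable[mΩ] (fun ω => F ω (g ω) (h ω)) := by
  set u : Vec n × Vec n → Ω → Vec n := fun p ω => F ω p.1 p.2 with hu
  have hcont : ∀ ω, Continuous fun p : Vec n × Vec n => u p ω := by
    intro ω
    apply (LipschitzWith.of_dist_le_mul (K := Real.toNNReal (2 * L)) ?_).continuous
    intro p q
    rw [Real.coe_toNNReal _ (by positivity)]
    calc dist (u p ω) (u q ω) = ‖F ω p.1 p.2 - F ω q.1 q.2‖ := dist_eq_norm _ _
      _ ≤ L * (‖p.1 - q.1‖ + ‖p.2 - q.2‖) := hlip ω _ _ _ _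
      _ ≤ 2 * L * dist p q := by
          have h1 : ‖p.1 - q.1‖ ≤ dist p q := by
            rw [Prod.dist_eq, ← dist_eq_norm]; exact le_max_left _ _
          have h2 : ‖p.2 - q.2‖ ≤ dist p q := by
            rw [Prod.dist_eq, ← dist_eq_norm]; exact le_max_right _ _
          nlinarith
  have hunc : Measurable[(inferInstance : MeasurableSpace (Vec n × Vec n)).prod mΩ]
      (Function.uncurry u) :=
    measurable_uncurry_of_continuous_of_measurable hcont (fun p => hmeas p.1 p.2)
  have heq : (fun ω => F ω (g ω) (h ω)) =
      Function.uncurry u ∘ (fun ω => ((g ω, h ω), ω)) := rfl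
  rw [heq]
  exact hunc.comp ((hg.prodMk hh).prodMk measurable_id)

private lemma step_norm_le {n : ℕ} {L : ℝ} {F : Ω → Vec n → Vec n → Vec n}
    (hlip : ∀ ω a b a' b', ‖F ω a b - F ω a' b'‖ ≤ L * (‖a - a'‖ + ‖b - b'‖))
    (ω : Ω) (a b : Vec n) : ‖F ω a b‖ ≤ ‖F ω 0 0‖ + L * (‖a‖ + ‖b‖) := by
  have := hlip ω a b 0 0
  simp only [sub_zero] at this
  have htri := norm_sub_norm_le (F ω a b) (F ω 0 0)
  linarith

private lemma step_memLp {n : ℕ} {L : ℝ} {F : Ω → Vec n → Vec n → Vec n}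
    {g h : Ω → Vec n}
    (hasm : AEStronglyMeasurable (fun ω => F ω (g ω) (h ω)) μ)
    (h0 : MemLp (fun ω => F ω 0 0) 2 μ) (hg : MemLp g 2 μ) (hh : MemLp h 2 μ)
    (hlip : ∀ ω a b a' b', ‖F ω a b - F ω a' b'‖ ≤ L * (‖a - a'‖ + ‖b - b'‖)) :
    MemLp (fun ω => F ω (g ω) (h ω)) 2 μ := by
  have hG : MemLp (fun ω => ‖F ω 0 0‖ + L * (‖g ω‖ + ‖h ω‖)) 2 μ :=
    h0.norm.add ((hg.norm.add hh.norm).const_mul L)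
  refine MemLp.of_le hG hasm ?_
  filter_upwards with ω
  exact (step_norm_le hlip ω (g ω) (h ω)).trans (le_abs_self _)

private lemma step_integral_bound {n : ℕ} {L : ℝ} {F : Ω → Vec n → Vec n → Vec n}
    {g h : Ω → Vec n} (hcomp : MemLp (fun ω => F ω (g ω) (h ω)) 2 μ)
    (h0 : MemLp (fun ω => F ω 0 0) 2 μ) (hg : MemLp g 2 μ) (hh : MemLp h 2 μ)
    (hlip : ∀ ω a b a' b', ‖F ω a b - F ω a' b'‖ ≤ L * (‖a - a'‖ + ‖b - b'‖)) :
    ∫ ω, ‖F ω (g ω) (h ω)‖ ^ 2 ∂μ ≤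
      3 * ∫ ω, ‖F ω 0 0‖ ^ 2 ∂μ + 3 * L ^ 2 * ∫ ω, ‖g ω‖ ^ 2 ∂μ
        + 3 * L ^ 2 * ∫ ω, ‖h ω‖ ^ 2 ∂μ := by
  have i0 : Integrable (fun ω => ‖F ω 0 0‖ ^ 2) μ :=
    (memLp_two_iff_integrable_sq_norm h0.aestronglyMeasurable).mp h0
  have ig : Integrable (fun ω => ‖g ω‖ ^ 2) μ :=
    (memLp_two_iff_integrable_sq_norm hg.aestronglyMeasurable).mp hg
  have ih : Integrable (fun ω => ‖h ω‖ ^ 2) μ :=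
    (memLp_two_iff_integrable_sq_norm hh.aestronglyMeasurable).mp hh
  have ic : Integrable (fun ω => ‖F ω (g ω) (h ω)‖ ^ 2) μ :=
    (memLp_two_iff_integrable_sq_norm hcomp.aestronglyMeasurable).mp hcomp
  have key : ∫ ω, ‖F ω (g ω) (h ω)‖ ^ 2 ∂μ ≤
      ∫ ω, (3 * ‖F ω 0 0‖ ^ 2 + 3 * L ^ 2 * ‖g ω‖ ^ 2 + 3 * L ^ 2 * ‖h ω‖ ^ 2) ∂μ := by
    refine integral_mono ic (((i0.const_mul 3).add (ig.const_mul (3 * L ^ 2))).add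
      (ih.const_mul (3 * L ^ 2))) ?_
    intro ω
    have hb := step_norm_le hlip ω (g ω) (h ω)
    have h1 : (0:ℝ) ≤ ‖F ω (g ω) (h ω)‖ := norm_nonneg _
    have h2 : (0:ℝ) ≤ ‖F ω 0 0‖ := norm_nonneg _
    have h3 : (0:ℝ) ≤ ‖g ω‖ := norm_nonneg _
    have h4 : (0:ℝ) ≤ ‖h ω‖ := norm_nonneg _
    simp only
    nlinarith [sq_nonneg (‖F ω 0 0‖ - L * ‖g ω‖), sq_nonneg (‖F ω 0 0‖ - L * ‖h ω‖),
      sq_nonneg (L * ‖g ω‖ - L * ‖h ω‖)]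
  calc ∫ ω, ‖F ω (g ω) (h ω)‖ ^ 2 ∂μ
      ≤ ∫ ω, (3 * ‖F ω 0 0‖ ^ 2 + 3 * L ^ 2 * ‖g ω‖ ^ 2 + 3 * L ^ 2 * ‖h ω‖ ^ 2) ∂μ := key
    _ = _ := by
        rw [integral_add (f := fun ω => 3 * ‖F ω 0 0‖ ^ 2 + 3 * L ^ 2 * ‖g ω‖ ^ 2)
          (g := fun ω => 3 * L ^ 2 * ‖h ω‖ ^ 2)
          ((i0.const_mul 3).add (ig.const_mul (3 * L ^ 2)))
          (ih.const_mul (3 * L ^ 2)), integral_add (i0.const_mul 3) (ig.const_mul (3 * L ^ 2))]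
        rw [MeasureTheory.integral_const_mul, MeasureTheory.integral_const_mul,
          MeasureTheory.integral_const_mul]

end Helpers

/-- existence, uniqueness (up to a.e. equality) and a priori estimate for the
backward stochastic difference equation `y_k = f(k+1, y'_{k+1}, z'_{k+1})`, `y_N = ξ`,
where `y'_{k+1} = E[y_{k+1} | F_{k-1}]` and `z'_{k+1} = E[y_{k+1} w_k | F_{k-1}]`.
Here `G k` plays the role of `F_{k-1}` and `f k` that of `f(k+1, ·, ·)`.
The constant `C` depends only on `N` and the Lipschitz constant `L`. -/
theorem stmt5 (n N : ℕ) (L : ℝ) (hL : 0 < L) :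
    ∃ C : ℝ, 0 < C ∧
      ∀ (Ω : Type) [m0 : MeasurableSpace Ω] (μ : Measure Ω) [IsProbabilityMeasure μ]
        (G : ℕ → MeasurableSpace Ω), Monotone G → (∀ k, G k ≤ m0) →
      ∀ (w : ℕ → Ω → ℝ),
        (∀ k, Measurable[G (k + 1)] (w k)) →
        (∀ k, μ[w k | G k] =ᵐ[μ] 0) →
        (∀ k, μ[fun ω => w k ω ^ 2 | G k] =ᵐ[μ] 1) →
      ∀ (f : ℕ → Ω → Vec n → Vec n → Vec n),
        (∀ k y' z', Measurable[G k] (fun ω => f k ω y' z')) →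
        (∀ k, MemLp (fun ω => f k ω 0 0) 2 μ) →
        (∀ k ω y' z' yb' zb',
          ‖f k ω y' z' - f k ω yb' zb'‖ ≤ L * (‖y' - yb'‖ + ‖z' - zb'‖)) →
      ∀ (ξ : Ω → Vec n), Measurable[G N] ξ → MemLp ξ 2 μ →
      ∃ y : ℕ → Ω → Vec n,
        (∀ k, k ≤ N → Measurable[G k] (y k)) ∧
        (∀ k, k ≤ N → MemLp (y k) 2 μ) ∧
        y N =ᵐ[μ] ξ ∧
        (∀ k, k < N → y k =ᵐ[μ] fun ω =>
          f k ω ((μ[y (k + 1) | G k]) ω)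
            ((μ[fun ω' => w k ω' • y (k + 1) ω' | G k]) ω)) ∧
        (∀ y' : ℕ → Ω → Vec n,
          (∀ k, k ≤ N → Measurable[G k] (y' k)) → (∀ k, k ≤ N → MemLp (y' k) 2 μ) →
          y' N =ᵐ[μ] ξ →
          (∀ k, k < N → y' k =ᵐ[μ] fun ω =>
            f k ω ((μ[y' (k + 1) | G k]) ω)
              ((μ[fun ω' => w k ω' • y' (k + 1) ω' | G k]) ω)) →
          ∀ k, k ≤ N → y' k =ᵐ[μ] y k) ∧
        ∑ k ∈ Finset.range (N + 1), ∫ ω, ‖y k ω‖ ^ 2 ∂μ ≤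
          C * (∫ ω, ‖ξ ω‖ ^ 2 ∂μ +
            ∑ k ∈ Finset.range N, ∫ ω, ‖f k ω 0 0‖ ^ 2 ∂μ) := by
  set B : ℝ := 3 + 6 * L ^ 2 with hBdef
  have hB1 : (1:ℝ) ≤ B := by nlinarith
  have hB0 : (0:ℝ) < B := by nlinarith
  refine ⟨(N + 1 : ℝ) * B ^ N, by positivity, ?_⟩
  intro Ω m0 μ _ G hGmono hG w hwmeas hw0 hw2 f hfmeas hf0 hflip ξ hξmeas hξL2
  have hwL2 : ∀ k, MemLp (w k) 2 μ := fun k =>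
    w_memLp (((hwmeas k).mono (hG (k+1)) le_rfl).aestronglyMeasurable) (hw2 k)
  set S : ℝ := ∫ ω, ‖ξ ω‖ ^ 2 ∂μ + ∑ k ∈ Finset.range N, ∫ ω, ‖f k ω 0 0‖ ^ 2 ∂μ with hSdef
  have hint_nonneg : ∀ g : Ω → Vec n, 0 ≤ ∫ ω, ‖g ω‖ ^ 2 ∂μ := fun g =>
    integral_nonneg fun ω => by positivity
  have hS0 : 0 ≤ S := by
    have h1 := hint_nonneg ξ
    have h2 : 0 ≤ ∑ k ∈ Finset.range N, ∫ ω, ‖f k ω 0 0‖ ^ 2 ∂μ :=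
      Finset.sum_nonneg fun k _ => hint_nonneg _
    linarith
  have hfS : ∀ k, k < N → ∫ ω, ‖f k ω 0 0‖ ^ 2 ∂μ ≤ S := by
    intro k hk
    have h1 := hint_nonneg ξ
    have h2 : ∫ ω, ‖f k ω 0 0‖ ^ 2 ∂μ ≤ ∑ k ∈ Finset.range N, ∫ ω, ‖f k ω 0 0‖ ^ 2 ∂μ :=
      Finset.single_le_sum (f := fun k => ∫ ω, ‖f k ω 0 0‖ ^ 2 ∂μ)
        (fun k _ => hint_nonneg _) (Finset.mem_range.mpr hk)
    linarith
  -- backward recursion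
  let Y : ℕ → Ω → Vec n := fun j => Nat.rec ξ (fun j' Yj => fun ω =>
    f (N - j' - 1) ω ((μ[Yj|G (N - j' - 1)]) ω)
      ((μ[fun ω' => w (N - j' - 1) ω' • Yj ω'|G (N - j' - 1)]) ω)) j
  have hmain : ∀ j, j ≤ N →
      Measurable[G (N - j)] (Y j) ∧ MemLp (Y j) 2 μ ∧
        ∫ ω, ‖Y j ω‖ ^ 2 ∂μ ≤ B ^ j * S := by
    intro j
    induction j with
    | zero =>
      intro _
      refine ⟨hξmeas, hξL2, ?_⟩
      simp only [pow_zero, one_mul]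
      have h2 : 0 ≤ ∑ k ∈ Finset.range N, ∫ ω, ‖f k ω 0 0‖ ^ 2 ∂μ :=
        Finset.sum_nonneg fun k _ => hint_nonneg _
      show ∫ ω, ‖ξ ω‖ ^ 2 ∂μ ≤ S
      rw [hSdef]; linarith
    | succ j ih =>
      intro hj
      obtain ⟨ihm, ihl, ihe⟩ := ih (by omega)
      have hkN : N - j - 1 < N := by omega
      have hNj : N - j = (N - j - 1) + 1 := by omega
      have ha := condexp_sq_bound (hG (N - j - 1)) ihl
      have hb := condexp_smul_sq_bound (hG (N - j - 1)) (hwL2 (N - j - 1))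
        (hw2 (N - j - 1)) ihl
      have hmeas_step : Measurable[G (N - (j+1))] (Y (j+1)) := by
        have : N - (j+1) = N - j - 1 := by omega
        rw [this]
        exact step_measurable hL (hfmeas (N - j - 1)) (hflip (N - j - 1))
          (stronglyMeasurable_condExp.measurable) (stronglyMeasurable_condExp.measurable)
      have hasm : AEStronglyMeasurable (Y (j+1)) μ := by
        exact ((hmeas_step.mono (hG (N - (j+1))) le_rfl)).aestronglyMeasurable
      have hlp_step : MemLp (Y (j+1)) 2 μ :=
        step_memLp hasm (hf0 (N - j - 1)) ha.1 hb.1 (hflip (N - j - 1))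
      refine ⟨hmeas_step, hlp_step, ?_⟩
      have hint := step_integral_bound hlp_step (hf0 (N - j - 1)) ha.1 hb.1 (hflip (N - j - 1))
      have e1 : ∫ ω, ‖(μ[Y j|G (N - j - 1)]) ω‖ ^ 2 ∂μ ≤ B ^ j * S := ha.2.trans ihe
      have e2 : ∫ ω, ‖(μ[fun ω' => w (N - j - 1) ω' • Y j ω'|G (N - j - 1)]) ω‖ ^ 2 ∂μ
          ≤ B ^ j * S := hb.2.trans ihe
      have e3 := hfS (N - j - 1) hkN
      have hBj : (1:ℝ) ≤ B ^ j := one_le_pow₀ hB1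
      have hL2 : (0:ℝ) < L ^ 2 := by positivity
      calc ∫ ω, ‖Y (j+1) ω‖ ^ 2 ∂μ
          ≤ 3 * ∫ ω, ‖f (N - j - 1) ω 0 0‖ ^ 2 ∂μ
            + 3 * L ^ 2 * ∫ ω, ‖(μ[Y j|G (N - j - 1)]) ω‖ ^ 2 ∂μ
            + 3 * L ^ 2 * ∫ ω, ‖(μ[fun ω' => w (N - j - 1) ω' • Y j ω'|G (N - j - 1)]) ω‖ ^ 2 ∂μ := hint
        _ ≤ 3 * S + 3 * L ^ 2 * (B ^ j * S) + 3 * L ^ 2 * (B ^ j * S) := by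
            have g1 : (0:ℝ) ≤ 3 * L ^ 2 := by positivity
            have m1 := mul_le_mul_of_nonneg_left e1 g1
            have m2 := mul_le_mul_of_nonneg_left e2 g1
            have m3 : 3 * ∫ ω, ‖f (N - j - 1) ω 0 0‖ ^ 2 ∂μ ≤ 3 * S := by linarith
            linarith
        _ ≤ B ^ (j+1) * S := by
            have hpow : B ^ (j+1) = B * B ^ j := pow_succ' B j
            rw [hpow, hBdef]
            nlinarith [mul_nonneg (sub_nonneg.mpr hBj) hS0]
      done
  -- the solution
  set y : ℕ → Ω → Vec n := fun k => Y (N - k) with hydef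
  have hyN : y N = ξ := by
    show Y (N - N) = ξ
    rw [Nat.sub_self]
    rfl
  have hrec : ∀ k, k < N → y k = fun ω =>
      f k ω ((μ[y (k + 1)|G k]) ω)
        ((μ[fun ω' => w k ω' • y (k + 1) ω'|G k]) ω) := by
    intro k hk
    have e1 : N - k = (N - (k+1)) + 1 := by omega
    show Y (N - k) = _
    rw [e1]
    show (fun ω => f (N - (N - (k+1)) - 1) ω ((μ[Y (N - (k+1))|G (N - (N - (k+1)) - 1)]) ω)
      ((μ[fun ω' => w (N - (N - (k+1)) - 1) ω' • Y (N - (k+1)) ω'|G (N - (N - (k+1)) - 1)]) ω)) = _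
    have e2 : N - (N - (k+1)) - 1 = k := by omega
    rw [e2]
  have hmeasy : ∀ k, k ≤ N → Measurable[G k] (y k) := by
    intro k hk
    have := (hmain (N - k) (by omega)).1
    rwa [Nat.sub_sub_self hk] at this
  have hlpy : ∀ k, k ≤ N → MemLp (y k) 2 μ := fun k hk => (hmain (N - k) (by omega)).2.1
  refine ⟨y, hmeasy, hlpy, Filter.EventuallyEq.of_eq hyN,
    fun k hk => Filter.EventuallyEq.of_eq (hrec k hk), ?_, ?_⟩
  · -- uniqueness
    intro y' hy'meas hy'lp hy'N hy'rec
    have key : ∀ j, j ≤ N → y' (N - j) =ᵐ[μ] y (N - j) := by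
      intro j
      induction j with
      | zero =>
        intro _
        rw [Nat.sub_zero]
        exact hy'N.trans (Filter.EventuallyEq.of_eq hyN.symm)
      | succ j ih =>
        intro hj
        have ihh := ih (by omega)
        have hNj : N - j = (N - (j+1)) + 1 := by omega
        rw [hNj] at ihh
        have hkN : N - (j+1) < N := by omega
        have h1 : μ[y' ((N - (j+1)) + 1)|G (N - (j+1))]
            =ᵐ[μ] μ[y ((N - (j+1)) + 1)|G (N - (j+1))] := condExp_congr_ae ihh
        have h2 : μ[fun ω' => w (N - (j+1)) ω' • y' ((N - (j+1)) + 1) ω'|G (N - (j+1))]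
            =ᵐ[μ] μ[fun ω' => w (N - (j+1)) ω' • y ((N - (j+1)) + 1) ω'|G (N - (j+1))] :=
          condExp_congr_ae (ihh.mono fun ω hω => by simp only [hω])
        refine (hy'rec (N - (j+1)) hkN).trans ?_
        refine Filter.EventuallyEq.trans ?_
          (Filter.EventuallyEq.of_eq (hrec (N - (j+1)) hkN)).symm
        filter_upwards [h1, h2] with ω g1 g2
        rw [g1, g2]
    intro k hk
    have := key (N - k) (by omega)
    rwa [Nat.sub_sub_self hk] at this
  · -- estimate
    have hterm : ∀ k ∈ Finset.range (N + 1), ∫ ω, ‖y k ω‖ ^ 2 ∂μ ≤ B ^ N * S := by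
      intro k hk
      rw [Finset.mem_range] at hk
      have hkN : k ≤ N := by omega
      have := (hmain (N - k) (by omega)).2.2
      calc ∫ ω, ‖y k ω‖ ^ 2 ∂μ ≤ B ^ (N - k) * S := this
        _ ≤ B ^ N * S := by
            have := pow_le_pow_right₀ hB1 (Nat.sub_le N k)
            exact mul_le_mul_of_nonneg_right this hS0
    calc ∑ k ∈ Finset.range (N + 1), ∫ ω, ‖y k ω‖ ^ 2 ∂μ
        ≤ ∑ _k ∈ Finset.range (N + 1), B ^ N * S := Finset.sum_le_sum hterm
      _ = (N + 1 : ℝ) * B ^ N * S := by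
          rw [Finset.sum_const, Finset.card_range, nsmul_eq_mul]
          push_cast; ring
      _ = (N + 1 : ℝ) * B ^ N *
          (∫ ω, ‖ξ ω‖ ^ 2 ∂μ + ∑ k ∈ Finset.range N, ∫ ω, ‖f k ω 0 0‖ ^ 2 ∂μ) := by rw [hSdef]
end

section
/- Under the BSΔE Lipschitz setting, the one-step estimate holds: E[|y_{k-1} − ȳ_{k-1}|²] ≤ C · E[ |y_k − ȳ_k|² + |f(k, ȳ'_k, z̄'_k) − f̄(k, ȳ'_k, z̄'_k)|² ], where y_{k-1} = f(k, y'_k, z'_k), ȳ_{k-1} = f̄(k, ȳ'_k, z̄'_k), y'_k = E[y_k | F_{k-2}], z'_k = E[y_k w_{k-1} | F_{k-2}], and C depends only on the Lipschitz constant L. -/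
open MeasureTheory

set_option maxHeartbeats 1000000

section Aux

variable {Ω : Type} {mG : MeasurableSpace Ω} {m0 : MeasurableSpace Ω} {μ : Measure Ω}
  [IsProbabilityMeasure μ]

/-- Conditional expectation commutes with continuous linear maps to ℝ. -/
lemma condexp_clm_comm (hmG : mG ≤ m0) {n : ℕ} (T : Vec n →L[ℝ] ℝ) {f : Ω → Vec n}
    (hf : Integrable f μ) :
    (fun ω => T ((μ[f | mG]) ω)) =ᵐ[μ] μ[fun ω => T (f ω) | mG] := by
  have hTf : Integrable (fun ω => T (f ω)) μ := T.integrable_comp hf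
  have hce : Integrable (μ[f|mG]) μ := integrable_condExp
  have hTce : Integrable (fun ω => T ((μ[f|mG]) ω)) μ := T.integrable_comp hce
  refine ae_eq_condExp_of_forall_setIntegral_eq hmG hTf
    (fun s _ _ => hTce.integrableOn)
    (fun s hs _ => ?_)
    (StronglyMeasurable.aestronglyMeasurable (T.continuous.comp_stronglyMeasurable stronglyMeasurable_condExp))
  calc ∫ x in s, T ((μ[f|mG]) x) ∂μ
      = T (∫ x in s, (μ[f|mG]) x ∂μ) := T.integral_comp_comm hce.integrableOn
    _ = T (∫ x in s, f x ∂μ) := by rw [setIntegral_condExp hmG hf hs]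
    _ = ∫ x in s, T (f x) ∂μ := (T.integral_comp_comm hf.integrableOn).symm

/-- Scalar conditional Cauchy–Schwarz with `E[w²|mG] = 1`. -/
lemma condexp_cs_scalar (hmG : mG ≤ m0) {w g : Ω → ℝ}
    (hw2 : μ[fun ω => w ω ^ 2 | mG] =ᵐ[μ] 1)
    (hg : MemLp g 2 μ) (hwg : Integrable (fun ω => w ω * g ω) μ) :
    ∀ᵐ ω ∂μ, (μ[fun ω' => w ω' * g ω' | mG]) ω ^ 2 ≤ (μ[fun ω' => g ω' ^ 2 | mG]) ω := by
  have hw2int : Integrable (fun ω => w ω ^ 2) μ := by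
    by_contra h
    rw [condExp_of_not_integrable h] at hw2
    have : ∃ ω : Ω, (0 : ℝ) = 1 := by
      have := hw2.exists
      simpa using this
    simpa using this.choose_spec
  have hg2 : Integrable (fun ω => g ω ^ 2) μ := hg.integrable_sq
  have key : ∀ q : ℚ, ∀ᵐ ω ∂μ,
      0 ≤ (q : ℝ)^2 + 2*(q:ℝ)*(μ[fun ω' => w ω' * g ω' | mG]) ω
        + (μ[fun ω' => g ω' ^ 2 | mG]) ω := by
    intro q
    have hnn : (0 : Ω → ℝ) ≤ᵐ[μ] μ[fun ω => ((q:ℝ) * w ω + g ω)^2 | mG] :=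
      condExp_nonneg (Filter.Eventually.of_forall fun ω => sq_nonneg _)
    have hint1 : Integrable (fun ω => (q:ℝ)^2 * w ω ^ 2) μ := hw2int.const_mul _
    have hint2 : Integrable (fun ω => 2*(q:ℝ) * (w ω * g ω)) μ := hwg.const_mul _
    have e0 : μ[fun ω => ((q:ℝ) * w ω + g ω)^2 | mG]
        =ᵐ[μ] μ[(fun ω => (q:ℝ)^2 * w ω ^ 2) + ((fun ω => 2*(q:ℝ) * (w ω * g ω)) + fun ω => g ω ^ 2) | mG] :=
      condExp_congr_ae (Filter.Eventually.of_forall fun ω => by simp [Pi.add_apply]; ring)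
    have e1 := condExp_add (μ := μ) (m := mG) hint1 (hint2.add hg2)
    have e2 := condExp_add (μ := μ) (m := mG) hint2 hg2
    have e3 : μ[fun ω => (q:ℝ)^2 * w ω ^ 2 | mG]
        =ᵐ[μ] fun ω => (q:ℝ)^2 * (μ[fun ω' => w ω' ^ 2 | mG]) ω := by
      have := condExp_smul (μ := μ) (m := mG) ((q:ℝ)^2) (fun ω => w ω ^ 2)
      refine .trans (condExp_congr_ae ?_) (this.trans ?_)
      · exact Filter.Eventually.of_forall fun ω => by simp [smul_eq_mul]
      · exact Filter.Eventually.of_forall fun ω => by simp [smul_eq_mul]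
    have e4 : μ[fun ω => 2*(q:ℝ) * (w ω * g ω) | mG]
        =ᵐ[μ] fun ω => 2*(q:ℝ) * (μ[fun ω' => w ω' * g ω' | mG]) ω := by
      have := condExp_smul (μ := μ) (m := mG) (2*(q:ℝ)) (fun ω => w ω * g ω)
      refine .trans (condExp_congr_ae ?_) (this.trans ?_)
      · exact Filter.Eventually.of_forall fun ω => by simp [smul_eq_mul]
      · exact Filter.Eventually.of_forall fun ω => by simp [smul_eq_mul]
    filter_upwards [hnn, e0, e1, e2, e3, e4, hw2] with ω h0 h0' h1 h2 h3 h4 hw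
    rw [h0'] at h0
    rw [Pi.add_apply] at h1 h2
    rw [h1, h2, h3, h4, hw] at h0
    simp only [Pi.one_apply, Pi.zero_apply] at h0
    linarith [h0]
  have hall := (ae_all_iff).2 key
  filter_upwards [hall] with ω hq
  set b := (μ[fun ω' => w ω' * g ω' | mG]) ω with hb
  set c := (μ[fun ω' => g ω' ^ 2 | mG]) ω with hc
  have hreal : ∀ x : ℝ, 0 ≤ x^2 + 2*x*b + c := by
    intro x
    refine Rat.denseRange_cast.induction_on x ?_ hq
    exact isClosed_le continuous_const (by fun_prop)
  have := hreal (-b)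
  nlinarith

/-- Vector conditional Cauchy–Schwarz with `E[w²|mG] = 1`. -/
lemma condexp_cs_vec (hmG : mG ≤ m0) {n : ℕ} {w : Ω → ℝ}
    (hw2 : μ[fun ω => w ω ^ 2 | mG] =ᵐ[μ] 1)
    {Y : Ω → Vec n} (hY : MemLp Y 2 μ) (hwY : Integrable (fun ω => w ω • Y ω) μ) :
    ∀ᵐ ω ∂μ, ‖(μ[fun ω' => w ω' • Y ω' | mG]) ω‖ ^ 2 ≤ (μ[fun ω' => ‖Y ω'‖ ^ 2 | mG]) ω := by
  have hYint : Integrable Y μ := hY.integrable (by norm_num)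
  have hcoord : ∀ i : Fin n,
      (fun ω => (μ[fun ω' => w ω' • Y ω' | mG]) ω i)
        =ᵐ[μ] μ[fun ω' => w ω' * Y ω' i | mG] := by
    intro i
    have := condexp_clm_comm (μ := μ) hmG (EuclideanSpace.proj i) hwY
    exact this
  have hcs : ∀ i : Fin n, ∀ᵐ ω ∂μ,
      (μ[fun ω' => w ω' * Y ω' i | mG]) ω ^ 2 ≤ (μ[fun ω' => Y ω' i ^ 2 | mG]) ω := by
    intro i
    refine condexp_cs_scalar hmG hw2 ?_ ?_
    · exact ((EuclideanSpace.proj (𝕜 := ℝ) i).comp_memLp' hY)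
    · have := (EuclideanSpace.proj (𝕜 := ℝ) i).integrable_comp hwY
      exact this
  have hsum : μ[fun ω' => ‖Y ω'‖ ^ 2 | mG]
      =ᵐ[μ] fun ω => ∑ i : Fin n, (μ[fun ω' => Y ω' i ^ 2 | mG]) ω := by
    have e0 : (fun ω' => ‖Y ω'‖ ^ 2) = fun ω' => ∑ i : Fin n, Y ω' i ^ 2 := by
      funext ω'
      rw [EuclideanSpace.norm_eq, Real.sq_sqrt (by positivity)]
      simp [sq_abs]
    rw [e0]
    have hint : ∀ i ∈ Finset.univ, Integrable (fun ω' => Y ω' i ^ 2) μ := fun i _ =>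
      ((EuclideanSpace.proj (𝕜 := ℝ) i).comp_memLp' hY).integrable_sq
    have := condExp_finsetSum (μ := μ) (m := mG) (s := Finset.univ)
      (f := fun i ω' => Y ω' i ^ 2) hint
    refine .trans (condExp_congr_ae (Filter.Eventually.of_forall fun ω => by simp)) (this.trans ?_)
    exact Filter.Eventually.of_forall fun ω => by simp
  have hAE := (ae_all_iff).2 hcoord
  have hAE2 := (ae_all_iff).2 hcs
  filter_upwards [hAE, hAE2, hsum] with ω h1 h2 h3
  have hnorm : ‖(μ[fun ω' => w ω' • Y ω' | mG]) ω‖ ^ 2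
      = ∑ i : Fin n, ((μ[fun ω' => w ω' • Y ω' | mG]) ω i) ^ 2 := by
    rw [EuclideanSpace.norm_eq, Real.sq_sqrt (by positivity)]
    simp [sq_abs]
  rw [hnorm, h3]
  exact Finset.sum_le_sum fun i _ => by rw [h1 i]; exact h2 i

end Aux

/-- one-step BSΔE estimate.  With `y_{k-1} = f(k, y'_k, z'_k)`,
`ȳ_{k-1} = f̄(k, ȳ'_k, z̄'_k)`, `y'_k = E[y_k | F_{k-2}]`, `z'_k = E[y_k w_{k-1} | F_{k-2}]`,
one has `E[‖y_{k-1} − ȳ_{k-1}‖²] ≤ C E[‖y_k − ȳ_k‖² + ‖f(k,ȳ'_k,z̄'_k) − f̄(k,ȳ'_k,z̄'_k)‖²]`,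
with `C` depending only on the Lipschitz constant `L`.  Here `mG` plays the role of
`F_{k-2}` and `w` of `w_{k-1}`. -/
theorem stmt7 (n : ℕ) (L : ℝ) (hL : 0 < L) :
    ∃ C : ℝ, 0 < C ∧
      ∀ (Ω : Type) [m0 : MeasurableSpace Ω] (μ : Measure Ω) [IsProbabilityMeasure μ]
        (mG : MeasurableSpace Ω), mG ≤ m0 →
      ∀ (w : Ω → ℝ),
        μ[w | mG] =ᵐ[μ] 0 →
        μ[fun ω => w ω ^ 2 | mG] =ᵐ[μ] 1 →
      ∀ (yk ybk : Ω → Vec n), MemLp yk 2 μ → MemLp ybk 2 μ →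
        Integrable (fun ω => w ω • yk ω) μ → Integrable (fun ω => w ω • ybk ω) μ →
      ∀ (f fb : Ω → Vec n → Vec n → Vec n),
        (∀ ω y' z' yb' zb',
          ‖f ω y' z' - f ω yb' zb'‖ ≤ L * (‖y' - yb'‖ + ‖z' - zb'‖)) →
        MemLp (fun ω => f ω ((μ[yk | mG]) ω)
          ((μ[fun ω' => w ω' • yk ω' | mG]) ω)) 2 μ →
        MemLp (fun ω => f ω ((μ[ybk | mG]) ω)
          ((μ[fun ω' => w ω' • ybk ω' | mG]) ω)) 2 μ →
        MemLp (fun ω => fb ω ((μ[ybk | mG]) ω)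
          ((μ[fun ω' => w ω' • ybk ω' | mG]) ω)) 2 μ →
        ∫ ω, ‖f ω ((μ[yk | mG]) ω) ((μ[fun ω' => w ω' • yk ω' | mG]) ω)
              - fb ω ((μ[ybk | mG]) ω) ((μ[fun ω' => w ω' • ybk ω' | mG]) ω)‖ ^ 2 ∂μ ≤
          C * ∫ ω, (‖yk ω - ybk ω‖ ^ 2 +
            ‖f ω ((μ[ybk | mG]) ω) ((μ[fun ω' => w ω' • ybk ω' | mG]) ω)
              - fb ω ((μ[ybk | mG]) ω) ((μ[fun ω' => w ω' • ybk ω' | mG]) ω)‖ ^ 2) ∂μ := by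
  refine ⟨8 * L ^ 2 + 2, by positivity, ?_⟩
  intro Ω m0 μ _ mG hmG w _hw1 hw2 yk ybk hyk hybk hwyk hwybk f fb hLip hA hD hB
  set p1 := μ[yk | mG] with hp1
  set p2 := μ[ybk | mG] with hp2
  set q1 := μ[fun ω' => w ω' • yk ω' | mG] with hq1
  set q2 := μ[fun ω' => w ω' • ybk ω' | mG] with hq2
  set Y := fun ω => yk ω - ybk ω with hYdef
  set cY := μ[fun ω' => ‖Y ω'‖ ^ 2 | mG] with hcY
  have hY : MemLp Y 2 μ := hyk.sub hybk
  have hykint : Integrable yk μ := hyk.integrable one_le_two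
  have hybkint : Integrable ybk μ := hybk.integrable one_le_two
  have hwY : Integrable (fun ω => w ω • Y ω) μ :=
    (hwyk.sub hwybk).congr (Filter.Eventually.of_forall fun ω => (smul_sub _ _ _).symm)
  have h3 : ∀ᵐ ω ∂μ, ‖(μ[fun ω' => w ω' • Y ω' | mG]) ω‖ ^ 2 ≤ cY ω :=
    condexp_cs_vec hmG hw2 hY hwY
  have hone : μ[fun (_ : Ω) => (1 : ℝ) ^ 2 | mG] =ᵐ[μ] 1 := by
    have h : (fun (_ : Ω) => (1 : ℝ) ^ 2) = fun _ => (1 : ℝ) := by funext; norm_num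
    rw [h, condExp_const hmG]
    exact Filter.Eventually.of_forall fun ω => rfl
  have h4' : ∀ᵐ ω ∂μ, ‖(μ[fun ω' => (1 : ℝ) • Y ω' | mG]) ω‖ ^ 2 ≤ cY ω :=
    condexp_cs_vec hmG hone hY
      ((hY.integrable one_le_two).congr
        (Filter.Eventually.of_forall fun ω => (one_smul ℝ (Y ω)).symm))
  have hsmul : μ[fun ω' => (1 : ℝ) • Y ω' | mG] =ᵐ[μ] μ[Y | mG] :=
    condExp_congr_ae (Filter.Eventually.of_forall fun ω => one_smul ℝ (Y ω))
  have h4 : ∀ᵐ ω ∂μ, ‖(μ[Y | mG]) ω‖ ^ 2 ≤ cY ω := by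
    filter_upwards [h4', hsmul] with ω ha hb
    rw [hb] at ha; exact ha
  have h1 : μ[Y | mG] =ᵐ[μ] fun ω => p1 ω - p2 ω := by
    have := condExp_sub (μ := μ) (m := mG) hykint hybkint
    exact this
  have h2 : μ[fun ω' => w ω' • Y ω' | mG] =ᵐ[μ] fun ω => q1 ω - q2 ω := by
    have e := condExp_congr_ae (μ := μ) (m := mG)
      (Filter.Eventually.of_forall fun ω => smul_sub (w ω) (yk ω) (ybk ω))
    have := condExp_sub (μ := μ) (m := mG) hwyk hwybk
    exact e.trans this
  have hc0 : ∀ᵐ ω ∂μ, 0 ≤ cY ω :=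
    condExp_nonneg (Filter.Eventually.of_forall fun ω => sq_nonneg _)
  have hpt : ∀ᵐ ω ∂μ,
      ‖f ω (p1 ω) (q1 ω) - fb ω (p2 ω) (q2 ω)‖ ^ 2 ≤
        8 * L ^ 2 * cY ω + 2 * ‖f ω (p2 ω) (q2 ω) - fb ω (p2 ω) (q2 ω)‖ ^ 2 := by
    filter_upwards [h1, h2, h3, h4, hc0] with ω e1 e2 e3 e4 e5
    rw [e1] at e4
    rw [e2] at e3
    have hlip := hLip ω (p1 ω) (q1 ω) (p2 ω) (q2 ω)
    have htri : ‖f ω (p1 ω) (q1 ω) - fb ω (p2 ω) (q2 ω)‖ ≤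
        ‖f ω (p1 ω) (q1 ω) - f ω (p2 ω) (q2 ω)‖ +
          ‖f ω (p2 ω) (q2 ω) - fb ω (p2 ω) (q2 ω)‖ :=
      norm_sub_le_norm_sub_add_norm_sub _ _ _
    set s := ‖p1 ω - p2 ω‖
    set t := ‖q1 ω - q2 ω‖
    set d := ‖f ω (p2 ω) (q2 ω) - fb ω (p2 ω) (q2 ω)‖
    set u := ‖f ω (p1 ω) (q1 ω) - fb ω (p2 ω) (q2 ω)‖
    set v := ‖f ω (p1 ω) (q1 ω) - f ω (p2 ω) (q2 ω)‖
    have hs : 0 ≤ s := norm_nonneg _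
    have ht : 0 ≤ t := norm_nonneg _
    have hd : 0 ≤ d := norm_nonneg _
    have hu : 0 ≤ u := norm_nonneg _
    have hv : 0 ≤ v := norm_nonneg _
    nlinarith [sq_nonneg (s - t), sq_nonneg (v - d), sq_nonneg (s + t),
      mul_le_mul_of_nonneg_left hlip (le_of_lt hL), sq_nonneg (L * (s + t) - v),
      mul_self_nonneg (u - v - d), sq_nonneg L]
  have hABl2 : MemLp (fun ω => f ω (p1 ω) (q1 ω) - fb ω (p2 ω) (q2 ω)) 2 μ := hA.sub hB
  have hDBl2 : MemLp (fun ω => f ω (p2 ω) (q2 ω) - fb ω (p2 ω) (q2 ω)) 2 μ := hD.sub hB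
  have hIntAB : Integrable (fun ω => ‖f ω (p1 ω) (q1 ω) - fb ω (p2 ω) (q2 ω)‖ ^ 2) μ :=
    hABl2.norm.integrable_sq
  have hIntDB : Integrable (fun ω => ‖f ω (p2 ω) (q2 ω) - fb ω (p2 ω) (q2 ω)‖ ^ 2) μ :=
    hDBl2.norm.integrable_sq
  have hIntcY : Integrable cY μ := integrable_condExp
  have hIntY2 : Integrable (fun ω => ‖Y ω‖ ^ 2) μ := hY.norm.integrable_sq
  have hnn1 : 0 ≤ ∫ ω, ‖Y ω‖ ^ 2 ∂μ := integral_nonneg fun ω => sq_nonneg _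
  have hnn2 : 0 ≤ ∫ ω, ‖f ω (p2 ω) (q2 ω) - fb ω (p2 ω) (q2 ω)‖ ^ 2 ∂μ :=
    integral_nonneg fun ω => sq_nonneg _
  calc ∫ ω, ‖f ω (p1 ω) (q1 ω) - fb ω (p2 ω) (q2 ω)‖ ^ 2 ∂μ
      ≤ ∫ ω, (8 * L ^ 2 * cY ω + 2 * ‖f ω (p2 ω) (q2 ω) - fb ω (p2 ω) (q2 ω)‖ ^ 2) ∂μ :=
        integral_mono_ae hIntAB ((hIntcY.const_mul _).add (hIntDB.const_mul 2)) hpt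
    _ = 8 * L ^ 2 * ∫ ω, cY ω ∂μ
        + 2 * ∫ ω, ‖f ω (p2 ω) (q2 ω) - fb ω (p2 ω) (q2 ω)‖ ^ 2 ∂μ := by
        rw [integral_add (hIntcY.const_mul _) (hIntDB.const_mul 2),
          integral_const_mul, integral_const_mul]
    _ = 8 * L ^ 2 * ∫ ω, ‖Y ω‖ ^ 2 ∂μ
        + 2 * ∫ ω, ‖f ω (p2 ω) (q2 ω) - fb ω (p2 ω) (q2 ω)‖ ^ 2 ∂μ := by
        rw [hcY, integral_condExp hmG]
    _ ≤ (8 * L ^ 2 + 2) * (∫ ω, ‖Y ω‖ ^ 2 ∂μ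
        + ∫ ω, ‖f ω (p2 ω) (q2 ω) - fb ω (p2 ω) (q2 ω)‖ ^ 2 ∂μ) := by nlinarith [sq_nonneg L]
    _ = (8 * L ^ 2 + 2) * ∫ ω, (‖Y ω‖ ^ 2
        + ‖f ω (p2 ω) (q2 ω) - fb ω (p2 ω) (q2 ω)‖ ^ 2) ∂μ := by
        rw [integral_add hIntY2 hIntDB]
end

section
/- In the forward LQ problem, if the Hamiltonian system x̄_{k+1} = A_k x̄_k + B_k ū_k + b_k + (C_k x̄_k + D_k ū_k + σ_k) w_k, ȳ_k = A_k^T ȳ'_{k+1} + C_k^T z̄'_{k+1} + Q_k x̄_k, x̄_0 = −M^{-1} ȳ_0, ȳ_N = G x̄_N, 0 = B_k^T ȳ'_{k+1} + D_k^T z̄'_{k+1} + R_k ū_k has a square-integrable adapted solution, then for any other initial state ξ and admissible control u with state process x, the cost difference satisfies J(0; ξ, u) − J(0; ξ̄, ū) = (1/2)E[ ⟨M(ξ−ξ̄), ξ−ξ̄⟩ + ⟨G(x_N−x̄_N), x_N−x̄_N⟩ + Σ_{k=0}^{N-1}( ⟨Q_k(x_k−x̄_k), x_k−x̄_k⟩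 + ⟨R_k(u_k−ū_k), u_k−ū_k⟩ ) ] ≥ 0, so that ξ̄ = −M^{-1}ȳ_0 and ū_k = −R_k^{-1}(B_k^T ȳ'_{k+1} + D_k^T z̄'_{k+1}) form an optimal pair; and by strict positive definiteness of M and R_k the optimal pair is unique. -/
open MeasureTheory Matrix
noncomputable section

def ev {m : ℕ} (x : Fin m → ℝ) : Vec m := WithLp.toLp 2 x

/-- quadratic cost of the forward LQ problem:
`J(0; ξ, u) = ½ E[⟨Mx₀,x₀⟩ + ⟨Gx_N,x_N⟩ + Σ_{k<N}(⟨Q_k x_k,x_k⟩ + ⟨R_k u_k,u_k⟩)]`. -/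
def Jcost (n m N : ℕ) (Ω : Type) [MeasurableSpace Ω] (P : Measure Ω)
    (M : Matrix (Fin n) (Fin n) ℝ) (Gm : Ω → Matrix (Fin n) (Fin n) ℝ)
    (Q : ℕ → Ω → Matrix (Fin n) (Fin n) ℝ) (R : ℕ → Ω → Matrix (Fin m) (Fin m) ℝ)
    (x : ℕ → Ω → Vec n) (u : ℕ → Ω → Vec m) : ℝ :=
  (1 / 2) * ∫ ω, (M.mulVec (x 0 ω) ⬝ᵥ x 0 ω + (Gm ω).mulVec (x N ω) ⬝ᵥ x N ω
    + ∑ k ∈ Finset.range N,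
        ((Q k ω).mulVec (x k ω) ⬝ᵥ x k ω + (R k ω).mulVec (u k ω) ⬝ᵥ u k ω)) ∂P

/-- the controlled forward dynamics
`x_{k+1} = A_k x_k + B_k u_k + b_k + (C_k x_k + D_k u_k + σ_k) w_k`, `x_0 = ξ`,
together with adaptedness and square-integrability of the pair `(x, u)`.
`G k` plays the role of `F_{k-1}`. -/
def AdmissiblePair (n m N : ℕ) (Ω : Type) [MeasurableSpace Ω] (P : Measure Ω)
    (G : ℕ → MeasurableSpace Ω) (w : ℕ → Ω → ℝ)
    (A Cm : ℕ → Ω → Matrix (Fin n) (Fin n) ℝ)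
    (B D : ℕ → Ω → Matrix (Fin n) (Fin m) ℝ)
    (bc σc : ℕ → Ω → Vec n)
    (ξ : Vec n) (u : ℕ → Ω → Vec m) (x : ℕ → Ω → Vec n) : Prop :=
  (∀ k, k ≤ N → Measurable[G k] (x k) ∧ MemLp (x k) 2 P) ∧
  (∀ k, k < N → Measurable[G k] (u k) ∧ MemLp (u k) 2 P) ∧
  (x 0 = fun _ => ξ) ∧
  (∀ k, k < N → ∀ᵐ ω ∂P, x (k + 1) ω =
    ev ((A k ω).mulVec (x k ω)) + ev ((B k ω).mulVec (u k ω)) + bc k ω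
    + w k ω • (ev ((Cm k ω).mulVec (x k ω)) + ev ((D k ω).mulVec (u k ω)) + σc k ω))

set_option linter.unusedSectionVars false
set_option linter.unusedVariables false
set_option maxHeartbeats 1000000

namespace S14
variable {Ω : Type} [m0 : MeasurableSpace Ω] {P : Measure Ω} [IsProbabilityMeasure P]

lemma pl_add {n : ℕ} (a b : Vec n) : (a + b : Vec n) = ((a : Fin n → ℝ) + (b : Fin n → ℝ)) := rfl
lemma pl_sub {n : ℕ} (a b : Vec n) : (a - b : Vec n) = ((a : Fin n → ℝ) - (b : Fin n → ℝ)) := rfl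
lemma pl_smul {n : ℕ} (c : ℝ) (a : Vec n) : (c • a : Vec n) = (c • (a : Fin n → ℝ)) := rfl
lemma pl_neg {n : ℕ} (a : Vec n) : (-a : Vec n) = (-(a : Fin n → ℝ)) := rfl
lemma pl_zero {n : ℕ} : ((0 : Vec n) : Fin n → ℝ) = (0 : Fin n → ℝ) := rfl
lemma ev_eq (n : ℕ) (x : Fin n → ℝ) : ev x = x := rfl

lemma mem2_proj {n : ℕ} {f : Ω → Vec n} (hf : MemLp f 2 P) (i : Fin n) :
    MemLp (fun ω => f ω i) 2 P :=
  (EuclideanSpace.proj (𝕜 := ℝ) i).comp_memLp' hf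

lemma int_mul {f g : Ω → ℝ} (hf : MemLp f 2 P) (hg : MemLp g 2 P) :
    Integrable (fun ω => f ω * g ω) P := by
  have h : (1 : ENNReal) / 1 = 1 / 2 + 1 / 2 := by
    rw [ENNReal.add_halves]; norm_num
  exact memLp_one_iff_integrable.mp (hg.smul hf)

lemma mem2_bdd_mul {c f : Ω → ℝ} (hc : AEStronglyMeasurable c P)
    (hbd : ∃ C, ∀ ω, |c ω| ≤ C) (hf : MemLp f 2 P) :
    MemLp (fun ω => c ω * f ω) 2 P := by
  obtain ⟨C, hC⟩ := hbd
  have hc' : MemLp c ⊤ P :=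
    memLp_top_of_bound hc C (Filter.Eventually.of_forall fun ω => by simpa using hC ω)
  exact hf.smul hc'

lemma mem2_mulVec_comp {a b : ℕ} {S : Ω → Matrix (Fin a) (Fin b) ℝ}
    (hSm : ∀ i j, AEStronglyMeasurable (fun ω => S ω i j) P)
    (hSbd : ∃ C, ∀ ω i j, |S ω i j| ≤ C)
    {f : Ω → Vec b} (hf : MemLp f 2 P) (i : Fin a) :
    MemLp (fun ω => (S ω *ᵥ (f ω : Fin b → ℝ)) i) 2 P := by
  have e : (fun ω => (S ω *ᵥ (f ω : Fin b → ℝ)) i)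
      = ∑ j : Fin b, fun ω => S ω i j * f ω j := by
    funext ω
    simp [Matrix.mulVec, dotProduct, Finset.sum_apply]
  rw [e]
  exact memLp_finset_sum' _ fun j _ =>
    mem2_bdd_mul (hSm i j) (hSbd.imp fun C h ω => h ω i j) (mem2_proj hf j)

lemma int_qform {a b : ℕ} {S : Ω → Matrix (Fin a) (Fin b) ℝ}
    (hSm : ∀ i j, AEStronglyMeasurable (fun ω => S ω i j) P)
    (hSbd : ∃ C, ∀ ω i j, |S ω i j| ≤ C)
    {f : Ω → Vec b} {g : Ω → Vec a} (hf : MemLp f 2 P) (hg : MemLp g 2 P) :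
    Integrable (fun ω => (S ω).mulVec (f ω) ⬝ᵥ (g ω : Fin a → ℝ)) P := by
  have e : (fun ω => (S ω).mulVec (f ω) ⬝ᵥ (g ω : Fin a → ℝ))
      = fun ω => ∑ i : Fin a, (S ω *ᵥ (f ω : Fin b → ℝ)) i * g ω i := by
    funext ω; simp [dotProduct]
  rw [e]
  exact integrable_finset_sum _ fun i _ =>
    int_mul (mem2_mulVec_comp hSm hSbd hf i) (mem2_proj hg i)

lemma int_dot {a : ℕ} {f g : Ω → Vec a} (hf : MemLp f 2 P) (hg : MemLp g 2 P) :
    Integrable (fun ω => (f ω : Fin a → ℝ) ⬝ᵥ (g ω : Fin a → ℝ)) P := by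
  have e : (fun ω => (f ω : Fin a → ℝ) ⬝ᵥ (g ω : Fin a → ℝ))
      = fun ω => ∑ i : Fin a, f ω i * g ω i := by
    funext ω; simp [dotProduct]
  rw [e]
  exact integrable_finset_sum _ fun i _ => int_mul (mem2_proj hf i) (mem2_proj hg i)

end S14
namespace S14
variable {Ω : Type} {m : MeasurableSpace Ω} [m0 : MeasurableSpace Ω] {P : Measure Ω}
  [IsProbabilityMeasure P]

lemma pull (hm : m ≤ m0) {f g : Ω → ℝ}
    (hfm : StronglyMeasurable[m] f) (hg : Integrable g P)
    (hfg : Integrable (fun ω => f ω * g ω) P) :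
    Integrable (fun ω => f ω * (P[g|m]) ω) P ∧
      ∫ ω, f ω * (P[g|m]) ω ∂P = ∫ ω, f ω * g ω ∂P := by
  have h := condExp_mul_of_stronglyMeasurable_left (μ := P) hfm hfg hg
  constructor
  · exact integrable_condExp.congr h
  · calc ∫ ω, f ω * (P[g|m]) ω ∂P = ∫ ω, (P[f * g|m]) ω ∂P := integral_congr_ae h.symm
      _ = ∫ ω, (f * g) ω ∂P := integral_condExp hm
      _ = ∫ ω, f ω * g ω ∂P := rfl

lemma condexp_proj {n : ℕ} (hm : m ≤ m0) {f : Ω → Vec n}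
    (hf : Integrable f P) (i : Fin n) :
    (fun ω => (P[f|m]) ω i) =ᵐ[P] P[fun ω => f ω i|m] := by
  refine ae_eq_condExp_of_forall_setIntegral_eq hm
    ((EuclideanSpace.proj (𝕜 := ℝ) i).integrable_comp hf) ?_ ?_ ?_
  · intro s _ _
    exact ((EuclideanSpace.proj (𝕜 := ℝ) i).integrable_comp integrable_condExp).integrableOn
  · intro s hs _
    calc ∫ ω in s, (P[f|m]) ω i ∂P
        = EuclideanSpace.proj (𝕜 := ℝ) i (∫ ω in s, (P[f|m]) ω ∂P) :=
          (EuclideanSpace.proj (𝕜 := ℝ) i).integral_comp_comm integrable_condExp.integrableOn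
      _ = EuclideanSpace.proj (𝕜 := ℝ) i (∫ ω in s, f ω ∂P) := by
          rw [setIntegral_condExp hm hf hs]
      _ = ∫ ω in s, f ω i ∂P :=
          ((EuclideanSpace.proj (𝕜 := ℝ) i).integral_comp_comm hf.integrableOn).symm
  · exact StronglyMeasurable.aestronglyMeasurable
      ((EuclideanSpace.proj (𝕜 := ℝ) i).continuous.comp_stronglyMeasurable
        stronglyMeasurable_condExp)

lemma step_eq {n : ℕ} (hm : m ≤ m0)
    {wk : Ω → ℝ} (hw2 : MemLp wk 2 P)
    {y : Ω → Vec n} (hy : MemLp y 2 P)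
    {v z : Ω → Vec n}
    (hvi : ∀ i, MemLp (fun ω => v ω i) 2 P)
    (hvm : ∀ i, StronglyMeasurable[m] (fun ω => v ω i))
    (hzi : ∀ i, MemLp (fun ω => z ω i) 2 P)
    (hzm : ∀ i, StronglyMeasurable[m] (fun ω => z ω i))
    (hwz : ∀ i, MemLp (fun ω => wk ω * z ω i) 2 P) :
    ∫ ω, (y ω : Fin n → ℝ) ⬝ᵥ (fun i => v ω i + wk ω * z ω i) ∂P
      = ∫ ω, (((P[y|m]) ω : Fin n → ℝ) ⬝ᵥ (v ω : Fin n → ℝ)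
          + ((P[fun ω' => wk ω' • y ω'|m]) ω : Fin n → ℝ) ⬝ᵥ (z ω : Fin n → ℝ)) ∂P := by
  have hyi : ∀ i, MemLp (fun ω => y ω i) 2 P := fun i => mem2_proj hy i
  have hY : Integrable y P := hy.integrable one_le_two
  have h11 : (1 : ENNReal) / 1 = 1 / 2 + 1 / 2 := by rw [ENNReal.add_halves]; norm_num
  have hWY : Integrable (fun ω => wk ω • y ω) P :=
    memLp_one_iff_integrable.mp (hy.smul hw2)
  -- pull-out for the v-part
  have p1 : ∀ i, Integrable (fun ω => v ω i * (P[fun ω' => y ω' i|m]) ω) P ∧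
      ∫ ω, v ω i * (P[fun ω' => y ω' i|m]) ω ∂P = ∫ ω, v ω i * y ω i ∂P := fun i =>
    pull hm (hvm i) ((hyi i).integrable one_le_two) (int_mul (hvi i) (hyi i))
  -- pull-out for the z-part
  have hwyint : ∀ i, Integrable (fun ω => wk ω * y ω i) P := fun i => int_mul hw2 (hyi i)
  have hzwy : ∀ i, Integrable (fun ω => z ω i * (wk ω * y ω i)) P := by
    intro i
    have := int_mul (hwz i) (hyi i)
    refine this.congr (Filter.Eventually.of_forall fun ω => by ring)
  have p2 : ∀ i, Integrable (fun ω => z ω i * (P[fun ω' => wk ω' * y ω' i|m]) ω) P ∧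
      ∫ ω, z ω i * (P[fun ω' => wk ω' * y ω' i|m]) ω ∂P
        = ∫ ω, z ω i * (wk ω * y ω i) ∂P := fun i =>
    pull hm (hzm i) (hwyint i) (hzwy i)
  -- componentwise identification of the vector conditional expectations
  have cp1 : ∀ᵐ ω ∂P, ∀ i, (P[y|m]) ω i = (P[fun ω' => y ω' i|m]) ω :=
    ae_all_iff.mpr fun i => condexp_proj hm hY i
  have cp2 : ∀ᵐ ω ∂P, ∀ i,
      (P[fun ω' => wk ω' • y ω'|m]) ω i = (P[fun ω' => wk ω' * y ω' i|m]) ω := by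
    refine ae_all_iff.mpr fun i => ?_
    have h := condexp_proj hm hWY i
    exact h
  -- compute the left side
  have e1 : ∫ ω, (y ω : Fin n → ℝ) ⬝ᵥ (fun i => v ω i + wk ω * z ω i) ∂P
      = ∑ i : Fin n, (∫ ω, v ω i * y ω i ∂P + ∫ ω, z ω i * (wk ω * y ω i) ∂P) := by
    have e : (fun ω => (y ω : Fin n → ℝ) ⬝ᵥ (fun i => v ω i + wk ω * z ω i))
        = fun ω => ∑ i : Fin n, (v ω i * y ω i + z ω i * (wk ω * y ω i)) := by
      funext ω; simp only [dotProduct]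
      exact Finset.sum_congr rfl fun i _ => by ring
    rw [e, integral_finset_sum]
    · exact Finset.sum_congr rfl fun i _ =>
        integral_add (int_mul (hvi i) (hyi i)) (hzwy i)
    · exact fun i _ => (int_mul (hvi i) (hyi i)).add (hzwy i)
  -- compute the right side
  have e2 : ∫ ω, (((P[y|m]) ω : Fin n → ℝ) ⬝ᵥ (v ω : Fin n → ℝ)
          + ((P[fun ω' => wk ω' • y ω'|m]) ω : Fin n → ℝ) ⬝ᵥ (z ω : Fin n → ℝ)) ∂P
      = ∑ i : Fin n, (∫ ω, v ω i * (P[fun ω' => y ω' i|m]) ω ∂P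
          + ∫ ω, z ω i * (P[fun ω' => wk ω' * y ω' i|m]) ω ∂P) := by
    have e : (fun ω => (((P[y|m]) ω : Fin n → ℝ) ⬝ᵥ (v ω : Fin n → ℝ)
          + ((P[fun ω' => wk ω' • y ω'|m]) ω : Fin n → ℝ) ⬝ᵥ (z ω : Fin n → ℝ)))
        =ᵐ[P] fun ω => ∑ i : Fin n, (v ω i * (P[fun ω' => y ω' i|m]) ω
          + z ω i * (P[fun ω' => wk ω' * y ω' i|m]) ω) := by
      filter_upwards [cp1, cp2] with ω h1 h2
      simp only [dotProduct, ← Finset.sum_add_distrib]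
      exact Finset.sum_congr rfl fun i _ => by rw [h1 i, h2 i]; ring
    rw [integral_congr_ae e, integral_finset_sum]
    · exact Finset.sum_congr rfl fun i _ => integral_add (p1 i).1 (p2 i).1
    · exact fun i _ => (p1 i).1.add (p2 i).1
  rw [e1, e2]
  exact Finset.sum_congr rfl fun i _ => by rw [(p1 i).2, (p2 i).2]

lemma pl_sub_apply {n : ℕ} (a b : Vec n) (i : Fin n) : (a - b) i = a i - b i := rfl
lemma pl_add_apply {n : ℕ} (a b : Vec n) (i : Fin n) : (a + b) i = a i + b i := rfl
lemma pl_smul_apply {n : ℕ} (c : ℝ) (a : Vec n) (i : Fin n) : (c • a) i = c * a i := rfl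

lemma dot_self_nonneg {a : ℕ} (p : Fin a → ℝ) : 0 ≤ p ⬝ᵥ p :=
  Finset.sum_nonneg fun i _ => mul_self_nonneg _

lemma psd_nonneg {a : ℕ} {S : Matrix (Fin a) (Fin a) ℝ} (hS : S.PosSemidef) (p : Fin a → ℝ) :
    0 ≤ S *ᵥ p ⬝ᵥ p := by
  have h := hS.dotProduct_mulVec_nonneg p
  rw [show star p = p from funext fun i => star_trivial _] at h
  rwa [dotProduct_comm] at h

lemma posdef_eq_zero {a : ℕ} {S : Matrix (Fin a) (Fin a) ℝ} (hS : S.PosDef) {p : Fin a → ℝ}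
    (h : S *ᵥ p ⬝ᵥ p = 0) : p = 0 := by
  by_contra hp
  have h2 := hS.dotProduct_mulVec_pos hp
  rw [show star p = p from funext fun i => star_trivial _, dotProduct_comm] at h2
  exact h2.ne' h

lemma dot_sym {a : ℕ} {S : Matrix (Fin a) (Fin a) ℝ} (hS : Sᵀ = S) (r s : Fin a → ℝ) :
    S *ᵥ r ⬝ᵥ s = S *ᵥ s ⬝ᵥ r := by
  rw [dotProduct_comm, Matrix.dotProduct_mulVec, ← Matrix.mulVec_transpose, hS]

lemma quad_expand {a : ℕ} {S : Matrix (Fin a) (Fin a) ℝ} (hS : Sᵀ = S) (p q : Fin a → ℝ) :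
    S *ᵥ p ⬝ᵥ p = S *ᵥ (p - q) ⬝ᵥ (p - q) + 2 * (S *ᵥ q ⬝ᵥ (p - q)) + S *ᵥ q ⬝ᵥ q := by
  simp only [Matrix.mulVec_sub, sub_dotProduct, dotProduct_sub]
  rw [dot_sym hS p q]
  ring

lemma vadd_dot {a : ℕ} (p q : Vec a) (s : Fin a → ℝ) :
    ((p + q : Vec a) : Fin a → ℝ) ⬝ᵥ s = (p : Fin a → ℝ) ⬝ᵥ s + (q : Fin a → ℝ) ⬝ᵥ s := by
  have h : ((p + q : Vec a) : Fin a → ℝ) = (p : Fin a → ℝ) + (q : Fin a → ℝ) := rfl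
  rw [h, add_dotProduct]

lemma mv_sub_apply {a b : ℕ} (S : Matrix (Fin a) (Fin b) ℝ) (p q : Vec b) (i : Fin a) :
    (S *ᵥ (p - q)) i = (S *ᵥ (p : Fin b → ℝ)) i - (S *ᵥ (q : Fin b → ℝ)) i := by
  rw [Matrix.mulVec_sub, Pi.sub_apply]

lemma meas_mulVec_comp {a b : ℕ} {mG : MeasurableSpace Ω} {S : Ω → Matrix (Fin a) (Fin b) ℝ}
    (hS : ∀ i j, Measurable[mG] fun ω => S ω i j) {f : Ω → Vec b}
    (hf : ∀ j, Measurable[mG] fun ω => f ω j) (i : Fin a) :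
    Measurable[mG] fun ω => (S ω *ᵥ (f ω : Fin b → ℝ)) i := by
  simp only [Matrix.mulVec, dotProduct]
  exact Finset.measurable_sum _ fun j _ => (hS i j).mul (hf j)

end S14



/-- verification and uniqueness for the forward LQ problem.  If the
Hamiltonian system (4.6) admits a square-integrable adapted solution `(x̄, ȳ, ū)`, then
for every admissible pair `(ξ, u)` the cost difference equals the quadratic form in the
state/control differences and is nonnegative (so `(ξ̄, ū)` is optimal), and by strict
positive definiteness of `M` and `R_k` the optimal pair is unique. -/
theorem stmt14 (n m N : ℕ)
    {Ω : Type} [m0 : MeasurableSpace Ω] (P : Measure Ω) [IsProbabilityMeasure P]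
    (G : ℕ → MeasurableSpace Ω) (hGmono : Monotone G) (hGle : ∀ k, G k ≤ m0)
    (w : ℕ → Ω → ℝ)
    (hwmeas : ∀ k, Measurable[G (k + 1)] (w k))
    (hw0 : ∀ k, P[w k | G k] =ᵐ[P] 0)
    (hw1 : ∀ k, P[fun ω => w k ω ^ 2 | G k] =ᵐ[P] 1)
    (A Cm : ℕ → Ω → Matrix (Fin n) (Fin n) ℝ)
    (B D : ℕ → Ω → Matrix (Fin n) (Fin m) ℝ)
    (Q : ℕ → Ω → Matrix (Fin n) (Fin n) ℝ) (R : ℕ → Ω → Matrix (Fin m) (Fin m) ℝ)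
    (M : Matrix (Fin n) (Fin n) ℝ) (Gm : Ω → Matrix (Fin n) (Fin n) ℝ)
    (bc σc : ℕ → Ω → Vec n)
    -- adaptedness / boundedness / integrability of the coefficients
    (hAmeas : ∀ k i j, Measurable[G k] (fun ω => A k ω i j))
    (hCmmeas : ∀ k i j, Measurable[G k] (fun ω => Cm k ω i j))
    (hBmeas : ∀ k i j, Measurable[G k] (fun ω => B k ω i j))
    (hDmeas : ∀ k i j, Measurable[G k] (fun ω => D k ω i j))
    (hQmeas : ∀ k i j, Measurable[G k] (fun ω => Q k ω i j))
    (hRmeas : ∀ k i j, Measurable[G k] (fun ω => R k ω i j))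
    (hGmmeas : ∀ i j, Measurable[G N] (fun ω => Gm ω i j))
    (hAbd : ∃ c, ∀ k ω i j, |A k ω i j| ≤ c) (hCmbd : ∃ c, ∀ k ω i j, |Cm k ω i j| ≤ c)
    (hBbd : ∃ c, ∀ k ω i j, |B k ω i j| ≤ c) (hDbd : ∃ c, ∀ k ω i j, |D k ω i j| ≤ c)
    (hQbd : ∃ c, ∀ k ω i j, |Q k ω i j| ≤ c) (hRbd : ∃ c, ∀ k ω i j, |R k ω i j| ≤ c)
    (hGmbd : ∃ c, ∀ ω i j, |Gm ω i j| ≤ c)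
    (hbL2 : ∀ k, Measurable[G k] (bc k) ∧ MemLp (bc k) 2 P)
    (hσL2 : ∀ k, Measurable[G k] (σc k) ∧ MemLp (σc k) 2 P)
    -- definiteness assumptions (Assumption 4.1)
    (hM : M.PosDef)
    (hGm : ∀ ω, (Gm ω).PosSemidef)
    (hQ : ∀ k ω, (Q k ω).PosSemidef)
    (hR : ∃ δ > (0:ℝ), ∀ k ω, (R k ω - δ • 1).PosSemidef)
    -- the solution of the Hamiltonian system (4.6)
    (xb yb : ℕ → Ω → Vec n) (ub : ℕ → Ω → Vec m) (ξb : Vec n)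
    (hybad : ∀ k, k ≤ N → Measurable[G k] (yb k) ∧ MemLp (yb k) 2 P)
    (hadm : AdmissiblePair n m N Ω P G w A Cm B D bc σc ξb ub xb)
    (hinit : ∀ᵐ ω ∂P, xb 0 ω = -ev (M⁻¹.mulVec (yb 0 ω)))
    (hbwd : ∀ k, k < N → ∀ᵐ ω ∂P, yb k ω =
      ev ((A k ω)ᵀ.mulVec ((P[yb (k + 1) | G k]) ω))
      + ev ((Cm k ω)ᵀ.mulVec ((P[fun ω' => w k ω' • yb (k + 1) ω' | G k]) ω))
      + ev ((Q k ω).mulVec (xb k ω)))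
    (hterm : ∀ᵐ ω ∂P, yb N ω = ev ((Gm ω).mulVec (xb N ω)))
    (hstat : ∀ k, k < N → ∀ᵐ ω ∂P, (0 : Vec m) =
      ev ((B k ω)ᵀ.mulVec ((P[yb (k + 1) | G k]) ω))
      + ev ((D k ω)ᵀ.mulVec ((P[fun ω' => w k ω' • yb (k + 1) ω' | G k]) ω))
      + ev ((R k ω).mulVec (ub k ω))) :
    -- conclusion: cost-difference identity, optimality, and uniqueness
    (∀ (ξ : Vec n) (u : ℕ → Ω → Vec m) (x : ℕ → Ω → Vec n),
      AdmissiblePair n m N Ω P G w A Cm B D bc σc ξ u x →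
      Jcost n m N Ω P M Gm Q R x u - Jcost n m N Ω P M Gm Q R xb ub =
        (1 / 2) * ∫ ω,
          (M.mulVec (x 0 ω - xb 0 ω) ⬝ᵥ (x 0 ω - xb 0 ω)
          + (Gm ω).mulVec (x N ω - xb N ω) ⬝ᵥ (x N ω - xb N ω)
          + ∑ k ∈ Finset.range N,
              ((Q k ω).mulVec (x k ω - xb k ω) ⬝ᵥ (x k ω - xb k ω)
              + (R k ω).mulVec (u k ω - ub k ω) ⬝ᵥ (u k ω - ub k ω))) ∂P
      ∧ Jcost n m N Ω P M Gm Q R xb ub ≤ Jcost n m N Ω P M Gm Q R x u)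
    ∧ (∀ (ξ : Vec n) (u : ℕ → Ω → Vec m) (x : ℕ → Ω → Vec n),
      AdmissiblePair n m N Ω P G w A Cm B D bc σc ξ u x →
      Jcost n m N Ω P M Gm Q R x u = Jcost n m N Ω P M Gm Q R xb ub →
      ξ = ξb ∧ ∀ k, k < N → u k =ᵐ[P] ub k) := by
  classical
  obtain ⟨δ, hδpos, hRδ⟩ := hR
  obtain ⟨hxbL, hubL, hxb0, hxbdyn⟩ := hadm
  -- symmetry facts
  have hMt : Mᵀ = M := hM.posSemidef.isHermitian
  have hGmt : ∀ ω, (Gm ω)ᵀ = Gm ω := fun ω => (hGm ω).isHermitian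
  have hQt : ∀ k ω, (Q k ω)ᵀ = Q k ω := fun k ω => (hQ k ω).isHermitian
  have hRt : ∀ k ω, (R k ω)ᵀ = R k ω := by
    intro k ω
    have h : (R k ω - δ • 1)ᵀ = R k ω - δ • 1 := (hRδ k ω).isHermitian
    have h2 : (R k ω)ᵀ - δ • (1 : Matrix (Fin m) (Fin m) ℝ) = R k ω - δ • 1 := by
      rw [← h]; simp [Matrix.transpose_sub, Matrix.transpose_smul]
    exact sub_left_inj.mp h2
  have hRquad : ∀ k ω (p : Fin m → ℝ), δ * (p ⬝ᵥ p) ≤ R k ω *ᵥ p ⬝ᵥ p := by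
    intro k ω p
    have h := S14.psd_nonneg (hRδ k ω) p
    have e : (R k ω - δ • 1) *ᵥ p ⬝ᵥ p = R k ω *ᵥ p ⬝ᵥ p - δ * (p ⬝ᵥ p) := by
      simp [Matrix.sub_mulVec, sub_dotProduct, Matrix.smul_mulVec,
        Matrix.one_mulVec, smul_dotProduct, smul_eq_mul]
    rw [e] at h; linarith
  have hRpsd : ∀ k ω (p : Fin m → ℝ), 0 ≤ R k ω *ᵥ p ⬝ᵥ p := fun k ω p =>
    le_trans (mul_nonneg hδpos.le (S14.dot_self_nonneg p)) (hRquad k ω p)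
  -- w is in L²
  have hwSM : ∀ k, AEStronglyMeasurable (w k) P :=
    fun k => ((hwmeas k).mono (hGle (k + 1)) le_rfl).aestronglyMeasurable
  have hwL2 : ∀ k, MemLp (w k) 2 P := by
    intro k
    refine (memLp_two_iff_integrable_sq (hwSM k)).mpr ?_
    by_contra hni
    have h0 : P[fun ω => w k ω ^ 2|G k] = 0 := condExp_of_not_integrable hni
    have h1 : (1 : Ω → ℝ) =ᵐ[P] (0 : Ω → ℝ) := (hw1 k).symm.trans (by rw [h0])
    obtain ⟨ω, hω⟩ := h1.exists
    norm_num [Pi.one_apply, Pi.zero_apply] at hω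
  -- ae strong measurability of the matrix entries
  have haeA : ∀ k i j, AEStronglyMeasurable (fun ω => A k ω i j) P :=
    fun k i j => ((hAmeas k i j).mono (hGle k) le_rfl).aestronglyMeasurable
  have haeB : ∀ k i j, AEStronglyMeasurable (fun ω => B k ω i j) P :=
    fun k i j => ((hBmeas k i j).mono (hGle k) le_rfl).aestronglyMeasurable
  have haeC : ∀ k i j, AEStronglyMeasurable (fun ω => Cm k ω i j) P :=
    fun k i j => ((hCmmeas k i j).mono (hGle k) le_rfl).aestronglyMeasurable
  have haeD : ∀ k i j, AEStronglyMeasurable (fun ω => D k ω i j) P :=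
    fun k i j => ((hDmeas k i j).mono (hGle k) le_rfl).aestronglyMeasurable
  have haeQ : ∀ k i j, AEStronglyMeasurable (fun ω => Q k ω i j) P :=
    fun k i j => ((hQmeas k i j).mono (hGle k) le_rfl).aestronglyMeasurable
  have haeR : ∀ k i j, AEStronglyMeasurable (fun ω => R k ω i j) P :=
    fun k i j => ((hRmeas k i j).mono (hGle k) le_rfl).aestronglyMeasurable
  have haeGm : ∀ i j, AEStronglyMeasurable (fun ω => Gm ω i j) P :=
    fun i j => ((hGmmeas i j).mono (hGle N) le_rfl).aestronglyMeasurable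
  -- bound repackaging
  have hAbd' : ∀ k, ∃ c, ∀ ω i j, |A k ω i j| ≤ c := fun k => hAbd.imp fun c h ω i j => h k ω i j
  have hBbd' : ∀ k, ∃ c, ∀ ω i j, |B k ω i j| ≤ c := fun k => hBbd.imp fun c h ω i j => h k ω i j
  have hCbd' : ∀ k, ∃ c, ∀ ω i j, |Cm k ω i j| ≤ c := fun k => hCmbd.imp fun c h ω i j => h k ω i j
  have hDbd' : ∀ k, ∃ c, ∀ ω i j, |D k ω i j| ≤ c := fun k => hDbd.imp fun c h ω i j => h k ω i j
  have hQbd' : ∀ k, ∃ c, ∀ ω i j, |Q k ω i j| ≤ c := fun k => hQbd.imp fun c h ω i j => h k ω i j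
  have hRbd' : ∀ k, ∃ c, ∀ ω i j, |R k ω i j| ≤ c := fun k => hRbd.imp fun c h ω i j => h k ω i j
  have hGmbd' : ∃ c, ∀ (ω : Ω) i j, |Gm ω i j| ≤ c := hGmbd
  have hMbd : ∃ c, ∀ (ω : Ω) (i j : Fin n), |M i j| ≤ c := by
    refine ⟨∑ i : Fin n, ∑ j : Fin n, |M i j|, fun ω i j => ?_⟩
    calc |M i j| ≤ ∑ j' : Fin n, |M i j'| :=
          Finset.single_le_sum (f := fun j' => |M i j'|) (fun _ _ => abs_nonneg _)
            (Finset.mem_univ j)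
      _ ≤ ∑ i' : Fin n, ∑ j' : Fin n, |M i' j'| :=
          Finset.single_le_sum (f := fun i' => ∑ j' : Fin n, |M i' j'|)
            (fun i' _ => Finset.sum_nonneg fun _ _ => abs_nonneg _) (Finset.mem_univ i)
  have haeM : ∀ (i j : Fin n), AEStronglyMeasurable (fun _ : Ω => M i j) P :=
    fun i j => aestronglyMeasurable_const
  -- projections are measurable
  have mproj : ∀ (a : ℕ) (i : Fin a), Measurable fun v : Vec a => v i :=
    fun a i => (EuclideanSpace.proj (𝕜 := ℝ) i).continuous.measurable
  -- value of yb at time 0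
  have hyb0 : ∀ᵐ ω ∂P, yb 0 ω = -(ev (M *ᵥ (ξb : Fin n → ℝ))) := by
    filter_upwards [hinit] with ω h
    have hξ : (ξb : Vec n) = -ev (M⁻¹.mulVec (yb 0 ω)) := by
      rw [← h, hxb0]
    have hm' : M *ᵥ (ξb : Fin n → ℝ) = -(yb 0 ω : Fin n → ℝ) := by
      rw [hξ, S14.pl_neg, S14.ev_eq, Matrix.mulVec_neg, Matrix.mulVec_mulVec,
        Matrix.mul_nonsing_inv _ hM.det_pos.ne'.isUnit, Matrix.one_mulVec]
    apply WithLp.ofLp_injective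
    funext i
    have h2 := congrFun hm' i
    rw [Pi.neg_apply] at h2
    rw [S14.pl_neg, Pi.neg_apply, S14.ev_eq]
    linarith
  -- the main cost-difference identity, for an arbitrary admissible pair
  have main : ∀ (ξ : Vec n) (u : ℕ → Ω → Vec m) (x : ℕ → Ω → Vec n),
      AdmissiblePair n m N Ω P G w A Cm B D bc σc ξ u x →
      (Jcost n m N Ω P M Gm Q R x u - Jcost n m N Ω P M Gm Q R xb ub =
        (1 / 2) * ∫ ω,
          (M.mulVec (x 0 ω - xb 0 ω) ⬝ᵥ (x 0 ω - xb 0 ω)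
          + (Gm ω).mulVec (x N ω - xb N ω) ⬝ᵥ (x N ω - xb N ω)
          + ∑ k ∈ Finset.range N,
              ((Q k ω).mulVec (x k ω - xb k ω) ⬝ᵥ (x k ω - xb k ω)
              + (R k ω).mulVec (u k ω - ub k ω) ⬝ᵥ (u k ω - ub k ω))) ∂P)
      ∧ Integrable (fun ω =>
          (M.mulVec (x 0 ω - xb 0 ω) ⬝ᵥ (x 0 ω - xb 0 ω)
          + (Gm ω).mulVec (x N ω - xb N ω) ⬝ᵥ (x N ω - xb N ω)
          + ∑ k ∈ Finset.range N,
              ((Q k ω).mulVec (x k ω - xb k ω) ⬝ᵥ (x k ω - xb k ω)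
              + (R k ω).mulVec (u k ω - ub k ω) ⬝ᵥ (u k ω - ub k ω)))) P := by
    intro ξ u x hadm'
    obtain ⟨hxL, huL, hx0, hxdyn⟩ := hadm'
    -- difference processes are in L²
    have hdxL : ∀ k, k ≤ N → MemLp (fun ω => x k ω - xb k ω) 2 P :=
      fun k hk => (hxL k hk).2.sub (hxbL k hk).2
    have hduL : ∀ k, k < N → MemLp (fun ω => u k ω - ub k ω) 2 P :=
      fun k hk => (huL k hk).2.sub (hubL k hk).2
    have hdxM : ∀ k, k ≤ N → ∀ i : Fin n, Measurable[G k] fun ω => (x k ω - xb k ω) i := by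
      intro k hk i
      exact ((mproj n i).comp (hxL k hk).1).sub ((mproj n i).comp (hxbL k hk).1)
    have hduM : ∀ k, k < N → ∀ i : Fin m, Measurable[G k] fun ω => (u k ω - ub k ω) i := by
      intro k hk i
      exact ((mproj m i).comp (huL k hk).1).sub ((mproj m i).comp (hubL k hk).1)
    -- one-step identity
    have tele : ∀ k, k < N →
        (∫ ω, (yb (k + 1) ω : Fin n → ℝ) ⬝ᵥ ((x (k + 1) ω - xb (k + 1) ω : Vec n) : Fin n → ℝ) ∂P)
        = (∫ ω, (yb k ω : Fin n → ℝ) ⬝ᵥ ((x k ω - xb k ω : Vec n) : Fin n → ℝ) ∂P)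
          - ∫ ω, ((Q k ω).mulVec (xb k ω) ⬝ᵥ ((x k ω - xb k ω : Vec n) : Fin n → ℝ)
              + (R k ω).mulVec (ub k ω) ⬝ᵥ ((u k ω - ub k ω : Vec m) : Fin m → ℝ)) ∂P := by
      intro k hk
      have hk1 : k + 1 ≤ N := hk
      have hkN : k ≤ N := le_of_lt hk
      set v : Ω → Vec n :=
        fun ω => ev (A k ω *ᵥ (x k ω - xb k ω) + B k ω *ᵥ (u k ω - ub k ω)) with hv
      set z : Ω → Vec n :=
        fun ω => ev (Cm k ω *ᵥ (x k ω - xb k ω) + D k ω *ᵥ (u k ω - ub k ω)) with hz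
      have hvL : ∀ i, MemLp (fun ω => v ω i) 2 P := by
        intro i
        exact (S14.mem2_mulVec_comp (haeA k) (hAbd' k) (hdxL k hkN) i).add
          (S14.mem2_mulVec_comp (haeB k) (hBbd' k) (hduL k hk) i)
      have hzL : ∀ i, MemLp (fun ω => z ω i) 2 P := by
        intro i
        exact (S14.mem2_mulVec_comp (haeC k) (hCbd' k) (hdxL k hkN) i).add
          (S14.mem2_mulVec_comp (haeD k) (hDbd' k) (hduL k hk) i)
      have hvm : ∀ i, Measurable[G k] fun ω => v ω i := by
        intro i
        exact (S14.meas_mulVec_comp (hAmeas k) (hdxM k hkN) i).add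
          (S14.meas_mulVec_comp (hBmeas k) (hduM k hk) i)
      have hzm : ∀ i, Measurable[G k] fun ω => z ω i := by
        intro i
        exact (S14.meas_mulVec_comp (hCmmeas k) (hdxM k hkN) i).add
          (S14.meas_mulVec_comp (hDmeas k) (hduM k hk) i)
      have hdyn : ∀ᵐ ω ∂P, ∀ i : Fin n,
          (x (k + 1) ω - xb (k + 1) ω) i = v ω i + w k ω * z ω i := by
        filter_upwards [hxdyn k hk, hxbdyn k hk] with ω h1 h2 i
        rw [S14.pl_sub_apply, h1, h2]
        simp only [hv, hz, S14.ev_eq, S14.pl_add_apply, S14.pl_smul_apply, S14.mv_sub_apply,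
          Pi.add_apply, smul_eq_mul]
        ring
      have hwz : ∀ i, MemLp (fun ω => w k ω * z ω i) 2 P := by
        intro i
        have he : (fun ω => (x (k + 1) ω - xb (k + 1) ω) i - v ω i)
            =ᵐ[P] fun ω => w k ω * z ω i := by
          filter_upwards [hdyn] with ω h
          rw [h i]; ring
        exact MemLp.ae_eq he ((S14.mem2_proj (hdxL (k + 1) hk1) i).sub (hvL i))
      have hstepmain := S14.step_eq (m := G k) (hGle k) (hwL2 k) (hybad (k + 1) hk1).2
        hvL (fun i => (hvm i).stronglyMeasurable) hzL (fun i => (hzm i).stronglyMeasurable) hwz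
      have lhs_eq :
          (∫ ω, (yb (k + 1) ω : Fin n → ℝ) ⬝ᵥ ((x (k + 1) ω - xb (k + 1) ω : Vec n) : Fin n → ℝ) ∂P)
          = ∫ ω, (yb (k + 1) ω : Fin n → ℝ) ⬝ᵥ (fun i => v ω i + w k ω * z ω i) ∂P := by
        refine integral_congr_ae ?_
        filter_upwards [hdyn] with ω h
        exact congrArg (fun q => (yb (k + 1) ω : Fin n → ℝ) ⬝ᵥ q) (funext h)
      have rhs_eq :
          (∫ ω, (((P[yb (k + 1)|G k]) ω : Fin n → ℝ) ⬝ᵥ (v ω : Fin n → ℝ)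
            + ((P[fun ω' => w k ω' • yb (k + 1) ω'|G k]) ω : Fin n → ℝ) ⬝ᵥ (z ω : Fin n → ℝ)) ∂P)
          = ∫ ω, ((yb k ω : Fin n → ℝ) ⬝ᵥ ((x k ω - xb k ω : Vec n) : Fin n → ℝ)
              - ((Q k ω).mulVec (xb k ω) ⬝ᵥ ((x k ω - xb k ω : Vec n) : Fin n → ℝ)
                + (R k ω).mulVec (ub k ω) ⬝ᵥ ((u k ω - ub k ω : Vec m) : Fin m → ℝ))) ∂P := by
        refine integral_congr_ae ?_
        filter_upwards [hbwd k hk, hstat k hk] with ω h1 h2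
        have h2d := congrArg
          (fun q : Vec m => (q : Fin m → ℝ) ⬝ᵥ ((u k ω - ub k ω : Vec m) : Fin m → ℝ)) h2.symm
        simp only [S14.ev_eq, S14.vadd_dot, S14.pl_zero, add_dotProduct,
          zero_dotProduct, Matrix.mulVec_transpose, ← Matrix.dotProduct_mulVec, WithLp.ofLp_sub] at h2d
        rw [h1]
        simp only [hv, hz, S14.ev_eq, S14.vadd_dot, add_dotProduct, dotProduct_add,
          Matrix.mulVec_transpose, ← Matrix.dotProduct_mulVec, WithLp.ofLp_sub]
        linarith [h2d]
      have hIyb : Integrable (fun ω =>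
          (yb k ω : Fin n → ℝ) ⬝ᵥ ((x k ω - xb k ω : Vec n) : Fin n → ℝ)) P :=
        S14.int_dot (hybad k hkN).2 (hdxL k hkN)
      have hIqr : Integrable (fun ω =>
          (Q k ω).mulVec (xb k ω) ⬝ᵥ ((x k ω - xb k ω : Vec n) : Fin n → ℝ)
          + (R k ω).mulVec (ub k ω) ⬝ᵥ ((u k ω - ub k ω : Vec m) : Fin m → ℝ)) P :=
        (S14.int_qform (haeQ k) (hQbd' k) (hxbL k hkN).2 (hdxL k hkN)).add
          (S14.int_qform (haeR k) (hRbd' k) (hubL k hk).2 (hduL k hk))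
      rw [lhs_eq, hstepmain, rhs_eq, integral_sub hIyb hIqr]
    -- telescoping
    have sumE : ∑ k ∈ Finset.range N,
        (∫ ω, ((Q k ω).mulVec (xb k ω) ⬝ᵥ ((x k ω - xb k ω : Vec n) : Fin n → ℝ)
            + (R k ω).mulVec (ub k ω) ⬝ᵥ ((u k ω - ub k ω : Vec m) : Fin m → ℝ)) ∂P)
        = (∫ ω, (yb 0 ω : Fin n → ℝ) ⬝ᵥ ((x 0 ω - xb 0 ω : Vec n) : Fin n → ℝ) ∂P)
          - ∫ ω, (yb N ω : Fin n → ℝ) ⬝ᵥ ((x N ω - xb N ω : Vec n) : Fin n → ℝ) ∂P := by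
      rw [← Finset.sum_range_sub' (fun k =>
        ∫ ω, (yb k ω : Fin n → ℝ) ⬝ᵥ ((x k ω - xb k ω : Vec n) : Fin n → ℝ) ∂P) N]
      refine Finset.sum_congr rfl fun k hkr => ?_
      rw [tele k (Finset.mem_range.mp hkr)]
      ring
    -- value at time 0
    have hF0 : (∫ ω, (yb 0 ω : Fin n → ℝ) ⬝ᵥ ((x 0 ω - xb 0 ω : Vec n) : Fin n → ℝ) ∂P)
        = -(M *ᵥ (ξb : Fin n → ℝ) ⬝ᵥ ((ξ - ξb : Vec n) : Fin n → ℝ)) := by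
      have hc : (fun ω => (yb 0 ω : Fin n → ℝ) ⬝ᵥ ((x 0 ω - xb 0 ω : Vec n) : Fin n → ℝ))
          =ᵐ[P] fun _ => -(M *ᵥ (ξb : Fin n → ℝ) ⬝ᵥ ((ξ - ξb : Vec n) : Fin n → ℝ)) := by
        filter_upwards [hyb0] with ω h
        rw [h, hx0, hxb0, S14.pl_neg, S14.ev_eq, neg_dotProduct]
      rw [integral_congr_ae hc, integral_const]
      simp
    -- value at time N
    have hFN : (∫ ω, (yb N ω : Fin n → ℝ) ⬝ᵥ ((x N ω - xb N ω : Vec n) : Fin n → ℝ) ∂P)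
        = ∫ ω, (Gm ω).mulVec (xb N ω) ⬝ᵥ ((x N ω - xb N ω : Vec n) : Fin n → ℝ) ∂P := by
      refine integral_congr_ae ?_
      filter_upwards [hterm] with ω h
      rw [h, S14.ev_eq]
    -- integrability of the three cross pieces
    have I1 : Integrable (fun ω => M.mulVec (xb 0 ω) ⬝ᵥ ((x 0 ω - xb 0 ω : Vec n) : Fin n → ℝ)) P :=
      S14.int_qform haeM hMbd (hxbL 0 (Nat.zero_le N)).2 (hdxL 0 (Nat.zero_le N))
    have I2 : Integrable (fun ω => (Gm ω).mulVec (xb N ω) ⬝ᵥ ((x N ω - xb N ω : Vec n) : Fin n → ℝ)) P :=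
      S14.int_qform haeGm hGmbd' (hxbL N le_rfl).2 (hdxL N le_rfl)
    have IQR : ∀ k, k < N → Integrable (fun ω =>
        (Q k ω).mulVec (xb k ω) ⬝ᵥ ((x k ω - xb k ω : Vec n) : Fin n → ℝ)
        + (R k ω).mulVec (ub k ω) ⬝ᵥ ((u k ω - ub k ω : Vec m) : Fin m → ℝ)) P := fun k hk =>
      (S14.int_qform (haeQ k) (hQbd' k) (hxbL k (le_of_lt hk)).2 (hdxL k (le_of_lt hk))).add
        (S14.int_qform (haeR k) (hRbd' k) (hubL k hk).2 (hduL k hk))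
    have Isum : Integrable (fun ω => ∑ k ∈ Finset.range N,
        ((Q k ω).mulVec (xb k ω) ⬝ᵥ ((x k ω - xb k ω : Vec n) : Fin n → ℝ)
        + (R k ω).mulVec (ub k ω) ⬝ᵥ ((u k ω - ub k ω : Vec m) : Fin m → ℝ))) P := by
      have := integrable_finset_sum (μ := P) (Finset.range N)
        (fun k hkr => IQR k (Finset.mem_range.mp hkr))
      exact this
    -- the cross term vanishes
    have hcross : ∫ ω, (M.mulVec (xb 0 ω) ⬝ᵥ ((x 0 ω - xb 0 ω : Vec n) : Fin n → ℝ)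
          + (Gm ω).mulVec (xb N ω) ⬝ᵥ ((x N ω - xb N ω : Vec n) : Fin n → ℝ)
          + ∑ k ∈ Finset.range N,
              ((Q k ω).mulVec (xb k ω) ⬝ᵥ ((x k ω - xb k ω : Vec n) : Fin n → ℝ)
              + (R k ω).mulVec (ub k ω) ⬝ᵥ ((u k ω - ub k ω : Vec m) : Fin m → ℝ))) ∂P = 0 := by
      have I12 : Integrable (fun ω => M.mulVec (xb 0 ω) ⬝ᵥ ((x 0 ω - xb 0 ω : Vec n) : Fin n → ℝ)
          + (Gm ω).mulVec (xb N ω) ⬝ᵥ ((x N ω - xb N ω : Vec n) : Fin n → ℝ)) P := I1.add I2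
      rw [integral_add I12 Isum, integral_add I1 I2,
        integral_finset_sum _ (fun k hkr => IQR k (Finset.mem_range.mp hkr))]
      have hM0 : (∫ ω, M.mulVec (xb 0 ω) ⬝ᵥ ((x 0 ω - xb 0 ω : Vec n) : Fin n → ℝ) ∂P)
          = M *ᵥ (ξb : Fin n → ℝ) ⬝ᵥ ((ξ - ξb : Vec n) : Fin n → ℝ) := by
        have hc : (fun ω => M.mulVec (xb 0 ω) ⬝ᵥ ((x 0 ω - xb 0 ω : Vec n) : Fin n → ℝ))
            = fun _ => M *ᵥ (ξb : Fin n → ℝ) ⬝ᵥ ((ξ - ξb : Vec n) : Fin n → ℝ) := by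
          funext ω; rw [hx0, hxb0]
        rw [hc, integral_const]
        simp
      rw [hM0, ← hFN, sumE, hF0]
      ring
    -- integrability of the four quadratic integrands
    have IJ : Integrable (fun ω => M.mulVec (x 0 ω) ⬝ᵥ (x 0 ω : Fin n → ℝ)
        + (Gm ω).mulVec (x N ω) ⬝ᵥ (x N ω : Fin n → ℝ)
        + ∑ k ∈ Finset.range N, ((Q k ω).mulVec (x k ω) ⬝ᵥ (x k ω : Fin n → ℝ)
          + (R k ω).mulVec (u k ω) ⬝ᵥ (u k ω : Fin m → ℝ))) P := by
      refine ((S14.int_qform haeM hMbd (hxL 0 (Nat.zero_le N)).2 (hxL 0 (Nat.zero_le N)).2).add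
        (S14.int_qform haeGm hGmbd' (hxL N le_rfl).2 (hxL N le_rfl).2)).add
        (integrable_finset_sum _ fun k hkr => ?_)
      have hk := Finset.mem_range.mp hkr
      exact (S14.int_qform (haeQ k) (hQbd' k) (hxL k (le_of_lt hk)).2 (hxL k (le_of_lt hk)).2).add
        (S14.int_qform (haeR k) (hRbd' k) (huL k hk).2 (huL k hk).2)
    have IJb : Integrable (fun ω => M.mulVec (xb 0 ω) ⬝ᵥ (xb 0 ω : Fin n → ℝ)
        + (Gm ω).mulVec (xb N ω) ⬝ᵥ (xb N ω : Fin n → ℝ)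
        + ∑ k ∈ Finset.range N, ((Q k ω).mulVec (xb k ω) ⬝ᵥ (xb k ω : Fin n → ℝ)
          + (R k ω).mulVec (ub k ω) ⬝ᵥ (ub k ω : Fin m → ℝ))) P := by
      refine ((S14.int_qform haeM hMbd (hxbL 0 (Nat.zero_le N)).2 (hxbL 0 (Nat.zero_le N)).2).add
        (S14.int_qform haeGm hGmbd' (hxbL N le_rfl).2 (hxbL N le_rfl).2)).add
        (integrable_finset_sum _ fun k hkr => ?_)
      have hk := Finset.mem_range.mp hkr
      exact (S14.int_qform (haeQ k) (hQbd' k) (hxbL k (le_of_lt hk)).2 (hxbL k (le_of_lt hk)).2).add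
        (S14.int_qform (haeR k) (hRbd' k) (hubL k hk).2 (hubL k hk).2)
    have IDQ : Integrable (fun ω =>
        (M.mulVec (x 0 ω - xb 0 ω) ⬝ᵥ (x 0 ω - xb 0 ω)
        + (Gm ω).mulVec (x N ω - xb N ω) ⬝ᵥ (x N ω - xb N ω)
        + ∑ k ∈ Finset.range N,
            ((Q k ω).mulVec (x k ω - xb k ω) ⬝ᵥ (x k ω - xb k ω)
            + (R k ω).mulVec (u k ω - ub k ω) ⬝ᵥ (u k ω - ub k ω)))) P := by
      refine ((S14.int_qform haeM hMbd (hdxL 0 (Nat.zero_le N)) (hdxL 0 (Nat.zero_le N))).add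
        (S14.int_qform haeGm hGmbd' (hdxL N le_rfl) (hdxL N le_rfl))).add
        (integrable_finset_sum _ fun k hkr => ?_)
      have hk := Finset.mem_range.mp hkr
      exact (S14.int_qform (haeQ k) (hQbd' k) (hdxL k (le_of_lt hk)) (hdxL k (le_of_lt hk))).add
        (S14.int_qform (haeR k) (hRbd' k) (hduL k hk) (hduL k hk))
    have ICr : Integrable (fun ω => M.mulVec (xb 0 ω) ⬝ᵥ ((x 0 ω - xb 0 ω : Vec n) : Fin n → ℝ)
        + (Gm ω).mulVec (xb N ω) ⬝ᵥ ((x N ω - xb N ω : Vec n) : Fin n → ℝ)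
        + ∑ k ∈ Finset.range N,
            ((Q k ω).mulVec (xb k ω) ⬝ᵥ ((x k ω - xb k ω : Vec n) : Fin n → ℝ)
            + (R k ω).mulVec (ub k ω) ⬝ᵥ ((u k ω - ub k ω : Vec m) : Fin m → ℝ))) P :=
      (I1.add I2).add Isum
    -- pointwise quadratic expansion
    have hptw : ∀ ω, M.mulVec (x 0 ω) ⬝ᵥ (x 0 ω : Fin n → ℝ)
        + (Gm ω).mulVec (x N ω) ⬝ᵥ (x N ω : Fin n → ℝ)
        + ∑ k ∈ Finset.range N, ((Q k ω).mulVec (x k ω) ⬝ᵥ (x k ω : Fin n → ℝ)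
          + (R k ω).mulVec (u k ω) ⬝ᵥ (u k ω : Fin m → ℝ))
        = (M.mulVec (x 0 ω - xb 0 ω) ⬝ᵥ (x 0 ω - xb 0 ω)
          + (Gm ω).mulVec (x N ω - xb N ω) ⬝ᵥ (x N ω - xb N ω)
          + ∑ k ∈ Finset.range N,
              ((Q k ω).mulVec (x k ω - xb k ω) ⬝ᵥ (x k ω - xb k ω)
              + (R k ω).mulVec (u k ω - ub k ω) ⬝ᵥ (u k ω - ub k ω)))
          + 2 * (M.mulVec (xb 0 ω) ⬝ᵥ ((x 0 ω - xb 0 ω : Vec n) : Fin n → ℝ)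
            + (Gm ω).mulVec (xb N ω) ⬝ᵥ ((x N ω - xb N ω : Vec n) : Fin n → ℝ)
            + ∑ k ∈ Finset.range N,
                ((Q k ω).mulVec (xb k ω) ⬝ᵥ ((x k ω - xb k ω : Vec n) : Fin n → ℝ)
                + (R k ω).mulVec (ub k ω) ⬝ᵥ ((u k ω - ub k ω : Vec m) : Fin m → ℝ)))
          + (M.mulVec (xb 0 ω) ⬝ᵥ (xb 0 ω : Fin n → ℝ)
            + (Gm ω).mulVec (xb N ω) ⬝ᵥ (xb N ω : Fin n → ℝ)
            + ∑ k ∈ Finset.range N, ((Q k ω).mulVec (xb k ω) ⬝ᵥ (xb k ω : Fin n → ℝ)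
              + (R k ω).mulVec (ub k ω) ⬝ᵥ (ub k ω : Fin m → ℝ))) := by
      intro ω
      have e3 : ∀ k ∈ Finset.range N,
          (Q k ω).mulVec (x k ω) ⬝ᵥ (x k ω : Fin n → ℝ)
            + (R k ω).mulVec (u k ω) ⬝ᵥ (u k ω : Fin m → ℝ)
          = (Q k ω).mulVec ((x k ω : Fin n → ℝ) - xb k ω) ⬝ᵥ ((x k ω : Fin n → ℝ) - xb k ω)
            + (R k ω).mulVec ((u k ω : Fin m → ℝ) - ub k ω) ⬝ᵥ ((u k ω : Fin m → ℝ) - ub k ω)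
            + 2 * ((Q k ω).mulVec (xb k ω) ⬝ᵥ ((x k ω : Fin n → ℝ) - xb k ω))
            + 2 * ((R k ω).mulVec (ub k ω) ⬝ᵥ ((u k ω : Fin m → ℝ) - ub k ω))
            + (Q k ω).mulVec (xb k ω) ⬝ᵥ (xb k ω : Fin n → ℝ)
            + (R k ω).mulVec (ub k ω) ⬝ᵥ (ub k ω : Fin m → ℝ) := by
        intro k _
        rw [S14.quad_expand (hQt k ω) (x k ω) (xb k ω),
          S14.quad_expand (hRt k ω) (u k ω) (ub k ω)]
        ring
      rw [Finset.sum_congr rfl e3, S14.quad_expand hMt (x 0 ω) (xb 0 ω),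
        S14.quad_expand (hGmt ω) (x N ω) (xb N ω)]
      simp only [Finset.sum_add_distrib, ← Finset.mul_sum, WithLp.ofLp_sub]
      ring
    -- put everything together
    have split : (∫ ω, (M.mulVec (x 0 ω) ⬝ᵥ (x 0 ω : Fin n → ℝ)
        + (Gm ω).mulVec (x N ω) ⬝ᵥ (x N ω : Fin n → ℝ)
        + ∑ k ∈ Finset.range N, ((Q k ω).mulVec (x k ω) ⬝ᵥ (x k ω : Fin n → ℝ)
          + (R k ω).mulVec (u k ω) ⬝ᵥ (u k ω : Fin m → ℝ))) ∂P)
        = (∫ ω, (M.mulVec (x 0 ω - xb 0 ω) ⬝ᵥ (x 0 ω - xb 0 ω)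
          + (Gm ω).mulVec (x N ω - xb N ω) ⬝ᵥ (x N ω - xb N ω)
          + ∑ k ∈ Finset.range N,
              ((Q k ω).mulVec (x k ω - xb k ω) ⬝ᵥ (x k ω - xb k ω)
              + (R k ω).mulVec (u k ω - ub k ω) ⬝ᵥ (u k ω - ub k ω))) ∂P)
          + (∫ ω, (M.mulVec (xb 0 ω) ⬝ᵥ (xb 0 ω : Fin n → ℝ)
            + (Gm ω).mulVec (xb N ω) ⬝ᵥ (xb N ω : Fin n → ℝ)
            + ∑ k ∈ Finset.range N, ((Q k ω).mulVec (xb k ω) ⬝ᵥ (xb k ω : Fin n → ℝ)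
              + (R k ω).mulVec (ub k ω) ⬝ᵥ (ub k ω : Fin m → ℝ))) ∂P) := by
      have he : (fun ω => M.mulVec (x 0 ω) ⬝ᵥ (x 0 ω : Fin n → ℝ)
          + (Gm ω).mulVec (x N ω) ⬝ᵥ (x N ω : Fin n → ℝ)
          + ∑ k ∈ Finset.range N, ((Q k ω).mulVec (x k ω) ⬝ᵥ (x k ω : Fin n → ℝ)
            + (R k ω).mulVec (u k ω) ⬝ᵥ (u k ω : Fin m → ℝ)))
          = fun ω => (M.mulVec (x 0 ω - xb 0 ω) ⬝ᵥ (x 0 ω - xb 0 ω)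
            + (Gm ω).mulVec (x N ω - xb N ω) ⬝ᵥ (x N ω - xb N ω)
            + ∑ k ∈ Finset.range N,
                ((Q k ω).mulVec (x k ω - xb k ω) ⬝ᵥ (x k ω - xb k ω)
                + (R k ω).mulVec (u k ω - ub k ω) ⬝ᵥ (u k ω - ub k ω)))
            + (2 * (M.mulVec (xb 0 ω) ⬝ᵥ ((x 0 ω - xb 0 ω : Vec n) : Fin n → ℝ)
              + (Gm ω).mulVec (xb N ω) ⬝ᵥ ((x N ω - xb N ω : Vec n) : Fin n → ℝ)
              + ∑ k ∈ Finset.range N,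
                  ((Q k ω).mulVec (xb k ω) ⬝ᵥ ((x k ω - xb k ω : Vec n) : Fin n → ℝ)
                  + (R k ω).mulVec (ub k ω) ⬝ᵥ ((u k ω - ub k ω : Vec m) : Fin m → ℝ)))
            + (M.mulVec (xb 0 ω) ⬝ᵥ (xb 0 ω : Fin n → ℝ)
              + (Gm ω).mulVec (xb N ω) ⬝ᵥ (xb N ω : Fin n → ℝ)
              + ∑ k ∈ Finset.range N, ((Q k ω).mulVec (xb k ω) ⬝ᵥ (xb k ω : Fin n → ℝ)
                + (R k ω).mulVec (ub k ω) ⬝ᵥ (ub k ω : Fin m → ℝ)))) := by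
        funext ω
        rw [hptw ω]; ring
      have IC2 : Integrable (fun ω => 2 * (M.mulVec (xb 0 ω) ⬝ᵥ ((x 0 ω - xb 0 ω : Vec n) : Fin n → ℝ)
          + (Gm ω).mulVec (xb N ω) ⬝ᵥ ((x N ω - xb N ω : Vec n) : Fin n → ℝ)
          + ∑ k ∈ Finset.range N,
              ((Q k ω).mulVec (xb k ω) ⬝ᵥ ((x k ω - xb k ω : Vec n) : Fin n → ℝ)
              + (R k ω).mulVec (ub k ω) ⬝ᵥ ((u k ω - ub k ω : Vec m) : Fin m → ℝ)))) P :=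
        ICr.const_mul 2
      have IC2Jb : Integrable (fun ω =>
          2 * (M.mulVec (xb 0 ω) ⬝ᵥ ((x 0 ω - xb 0 ω : Vec n) : Fin n → ℝ)
          + (Gm ω).mulVec (xb N ω) ⬝ᵥ ((x N ω - xb N ω : Vec n) : Fin n → ℝ)
          + ∑ k ∈ Finset.range N,
              ((Q k ω).mulVec (xb k ω) ⬝ᵥ ((x k ω - xb k ω : Vec n) : Fin n → ℝ)
              + (R k ω).mulVec (ub k ω) ⬝ᵥ ((u k ω - ub k ω : Vec m) : Fin m → ℝ)))
          + (M.mulVec (xb 0 ω) ⬝ᵥ (xb 0 ω : Fin n → ℝ)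
            + (Gm ω).mulVec (xb N ω) ⬝ᵥ (xb N ω : Fin n → ℝ)
            + ∑ k ∈ Finset.range N, ((Q k ω).mulVec (xb k ω) ⬝ᵥ (xb k ω : Fin n → ℝ)
              + (R k ω).mulVec (ub k ω) ⬝ᵥ (ub k ω : Fin m → ℝ)))) P := IC2.add IJb
      rw [he, integral_add IDQ IC2Jb, integral_add IC2 IJb, integral_const_mul, hcross]
      ring
    constructor
    · simp only [Jcost]
      rw [split]
      ring
    · exact IDQ
  refine ⟨fun ξ u x h => ?_, fun ξ u x h heq => ?_⟩
  · obtain ⟨hid, hIΔ⟩ := main ξ u x h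
    refine ⟨hid, ?_⟩
    have hnn : 0 ≤ ∫ ω,
        (M.mulVec (x 0 ω - xb 0 ω) ⬝ᵥ (x 0 ω - xb 0 ω)
        + (Gm ω).mulVec (x N ω - xb N ω) ⬝ᵥ (x N ω - xb N ω)
        + ∑ k ∈ Finset.range N,
            ((Q k ω).mulVec (x k ω - xb k ω) ⬝ᵥ (x k ω - xb k ω)
            + (R k ω).mulVec (u k ω - ub k ω) ⬝ᵥ (u k ω - ub k ω))) ∂P := by
      refine integral_nonneg fun ω => ?_
      refine add_nonneg (add_nonneg (S14.psd_nonneg hM.posSemidef _)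
        (S14.psd_nonneg (hGm ω) _)) (Finset.sum_nonneg fun k _ => ?_)
      exact add_nonneg (S14.psd_nonneg (hQ k ω) _) (hRpsd k ω _)
    linarith
  · obtain ⟨hid, hIΔ⟩ := main ξ u x h
    have hz0 : (∫ ω,
        (M.mulVec (x 0 ω - xb 0 ω) ⬝ᵥ (x 0 ω - xb 0 ω)
        + (Gm ω).mulVec (x N ω - xb N ω) ⬝ᵥ (x N ω - xb N ω)
        + ∑ k ∈ Finset.range N,
            ((Q k ω).mulVec (x k ω - xb k ω) ⬝ᵥ (x k ω - xb k ω)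
            + (R k ω).mulVec (u k ω - ub k ω) ⬝ᵥ (u k ω - ub k ω))) ∂P) = 0 := by
      rw [heq] at hid
      linarith [hid]
    have hnnf : 0 ≤ (fun ω =>
        (M.mulVec (x 0 ω - xb 0 ω) ⬝ᵥ (x 0 ω - xb 0 ω)
        + (Gm ω).mulVec (x N ω - xb N ω) ⬝ᵥ (x N ω - xb N ω)
        + ∑ k ∈ Finset.range N,
            ((Q k ω).mulVec (x k ω - xb k ω) ⬝ᵥ (x k ω - xb k ω)
            + (R k ω).mulVec (u k ω - ub k ω) ⬝ᵥ (u k ω - ub k ω)))) := by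
      intro ω
      refine add_nonneg (add_nonneg (S14.psd_nonneg hM.posSemidef _)
        (S14.psd_nonneg (hGm ω) _)) (Finset.sum_nonneg fun k _ => ?_)
      exact add_nonneg (S14.psd_nonneg (hQ k ω) _) (hRpsd k ω _)
    have hae := (integral_eq_zero_iff_of_nonneg hnnf hIΔ).mp hz0
    obtain ⟨hxL, huL, hx0, hxdyn⟩ := h
    constructor
    · obtain ⟨ω0, hω0⟩ := hae.exists
      simp only [Pi.zero_apply] at hω0
      have ht1 : 0 ≤ M.mulVec (x 0 ω0 - xb 0 ω0) ⬝ᵥ (x 0 ω0 - xb 0 ω0) :=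
        S14.psd_nonneg hM.posSemidef _
      have ht2 : 0 ≤ (Gm ω0).mulVec (x N ω0 - xb N ω0) ⬝ᵥ (x N ω0 - xb N ω0) :=
        S14.psd_nonneg (hGm ω0) _
      have ht3 : 0 ≤ ∑ k ∈ Finset.range N,
          ((Q k ω0).mulVec (x k ω0 - xb k ω0) ⬝ᵥ (x k ω0 - xb k ω0)
          + (R k ω0).mulVec (u k ω0 - ub k ω0) ⬝ᵥ (u k ω0 - ub k ω0)) :=
        Finset.sum_nonneg fun k _ =>
          add_nonneg (S14.psd_nonneg (hQ k ω0) _) (hRpsd k ω0 _)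
      have hMe : M.mulVec (x 0 ω0 - xb 0 ω0) ⬝ᵥ (x 0 ω0 - xb 0 ω0) = 0 := by linarith
      have hMe' : M *ᵥ ((ξ - ξb : Vec n) : Fin n → ℝ) ⬝ᵥ ((ξ - ξb : Vec n) : Fin n → ℝ) = 0 := by
        rw [← hMe, hx0, hxb0]; rfl
      have hz := S14.posdef_eq_zero hM hMe'
      apply WithLp.ofLp_injective
      funext i
      have := congrFun hz i
      rw [S14.pl_sub_apply] at this
      simp only [Pi.zero_apply] at this
      linarith
    · intro k hk
      filter_upwards [hae] with ω hΔ0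
      simp only [Pi.zero_apply] at hΔ0
      have ht1 : 0 ≤ M.mulVec (x 0 ω - xb 0 ω) ⬝ᵥ (x 0 ω - xb 0 ω) :=
        S14.psd_nonneg hM.posSemidef _
      have ht2 : 0 ≤ (Gm ω).mulVec (x N ω - xb N ω) ⬝ᵥ (x N ω - xb N ω) :=
        S14.psd_nonneg (hGm ω) _
      have ht3 : 0 ≤ ∑ j ∈ Finset.range N,
          ((Q j ω).mulVec (x j ω - xb j ω) ⬝ᵥ (x j ω - xb j ω)
          + (R j ω).mulVec (u j ω - ub j ω) ⬝ᵥ (u j ω - ub j ω)) :=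
        Finset.sum_nonneg fun j _ =>
          add_nonneg (S14.psd_nonneg (hQ j ω) _) (hRpsd j ω _)
      have hsum0 : ∑ j ∈ Finset.range N,
          ((Q j ω).mulVec (x j ω - xb j ω) ⬝ᵥ (x j ω - xb j ω)
          + (R j ω).mulVec (u j ω - ub j ω) ⬝ᵥ (u j ω - ub j ω)) = 0 := by linarith
      have hterm := (Finset.sum_eq_zero_iff_of_nonneg fun j _ =>
        add_nonneg (S14.psd_nonneg (hQ j ω) _) (hRpsd j ω _)).mp hsum0 k
        (Finset.mem_range.mpr hk)
      have hRe : (R k ω).mulVec (u k ω - ub k ω) ⬝ᵥ ((u k ω - ub k ω : Vec m) : Fin m → ℝ) = 0 := by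
        have := S14.psd_nonneg (hQ k ω) ((x k ω - xb k ω : Vec n) : Fin n → ℝ)
        have := hRpsd k ω ((u k ω - ub k ω : Vec m) : Fin m → ℝ)
        simp only [WithLp.ofLp_sub] at *
        linarith [hterm]
      have hd0 : ((u k ω - ub k ω : Vec m) : Fin m → ℝ) ⬝ᵥ ((u k ω - ub k ω : Vec m) : Fin m → ℝ) = 0 := by
        have h1 := hRquad k ω ((u k ω - ub k ω : Vec m) : Fin m → ℝ)
        have h2 := S14.dot_self_nonneg ((u k ω - ub k ω : Vec m) : Fin m → ℝ)
        simp only [WithLp.ofLp_sub] at h1 h2 hRe ⊢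
        rw [hRe] at h1
        nlinarith
      have hcomp : ∀ i : Fin m, (u k ω - ub k ω) i * (u k ω - ub k ω) i = 0 := by
        have h3 : ∑ i : Fin m, (u k ω - ub k ω) i * (u k ω - ub k ω) i = 0 := by
          simpa [dotProduct] using hd0
        exact fun i => (Finset.sum_eq_zero_iff_of_nonneg fun i _ =>
          mul_self_nonneg _).mp h3 i (Finset.mem_univ i)
      apply WithLp.ofLp_injective
      funext i
      have := mul_self_eq_zero.mp (hcomp i)
      rw [S14.pl_sub_apply] at this
      linarith
end
end

section
/- Key duality computation in the forward LQ verification: with (x̄, ȳ, ū) solving the Hamiltonian system and (x, u) any admissible state-control pair with the same forward dynamics, E[⟨M ξ̄, ξ−ξ̄⟩ + ⟨G x̄_N, x_N−x̄_N⟩] = E[ Σ_{k=0}^{N-1}( ⟨B_k^T ȳ'_{k+1} + D_k^T z̄'_{k+1}, u_k−ū_k⟩ − ⟨Q_k x̄_k, x_k−x̄_k⟩ ) ]. -/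
open MeasureTheory Matrix
noncomputable section

namespace Stmt16Aux

variable {Ω : Type} [m0 : MeasurableSpace Ω] {P : Measure Ω} [IsProbabilityMeasure P]

/-- product of two L² functions is integrable -/
lemma int_mul {f g : Ω → ℝ} (hf : MemLp f 2 P) (hg : MemLp g 2 P) :
    Integrable (fun ω => f ω * g ω) P := by
  have h2 : Integrable (fun ω => f ω ^ 2 + g ω ^ 2) P := hf.integrable_sq.add hg.integrable_sq
  refine Integrable.mono' h2 (hf.1.mul hg.1) (Filter.Eventually.of_forall fun ω => ?_)
  simp only [Real.norm_eq_abs, abs_mul]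
  nlinarith [abs_nonneg (f ω), abs_nonneg (g ω), sq_abs (f ω), sq_abs (g ω),
    sq_nonneg (|f ω| - |g ω|)]

/-- component of vector-valued condexp -/
lemma condexp_proj {mG : MeasurableSpace Ω} (hm : mG ≤ m0) {n : ℕ} {f : Ω → Vec n}
    (hf : Integrable f P) (i : Fin n) :
    (fun ω => (P[f|mG]) ω i) =ᵐ[P] P[fun ω => f ω i|mG] := by
  have key : (fun ω => EuclideanSpace.proj (𝕜 := ℝ) i ((P[f|mG]) ω)) =ᵐ[P]
      P[fun ω => EuclideanSpace.proj (𝕜 := ℝ) i (f ω)|mG] := by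
    refine ae_eq_condExp_of_forall_setIntegral_eq hm
      ((EuclideanSpace.proj (𝕜 := ℝ) i).integrable_comp hf)
      (fun s hs hμs => ((EuclideanSpace.proj (𝕜 := ℝ) i).integrable_comp
        (integrable_condExp)).mono_measure Measure.restrict_le_self)
      (fun s hs hμs => ?_) ?_
    · letI : MeasurableSpace Ω := m0
      rw [((EuclideanSpace.proj (𝕜 := ℝ) i).integral_comp_comm
          ((integrable_condExp).mono_measure Measure.restrict_le_self)),
        ((EuclideanSpace.proj (𝕜 := ℝ) i).integral_comp_comm
          (hf.mono_measure Measure.restrict_le_self)),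
        setIntegral_condExp hm hf hs]
    · exact StronglyMeasurable.aestronglyMeasurable
        ((EuclideanSpace.proj (𝕜 := ℝ) i).continuous.comp_stronglyMeasurable
          stronglyMeasurable_condExp)
  have hp : ∀ (v : Vec n), EuclideanSpace.proj (𝕜 := ℝ) i v = v i := fun v => rfl
  simpa only [hp] using key

/-- pull-out in integral form -/
lemma integral_pull {mG : MeasurableSpace Ω} (hm : mG ≤ m0) {f g : Ω → ℝ}
    (hf : StronglyMeasurable[mG] f) (hfg : Integrable (fun ω => f ω * g ω) P)
    (hg : Integrable g P) :
    ∫ ω, f ω * g ω ∂P = ∫ ω, f ω * (P[g|mG]) ω ∂P := by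
  have h := condExp_mul_of_stronglyMeasurable_left (μ := P) hf hfg hg
  calc ∫ ω, f ω * g ω ∂P = ∫ ω, (P[fun ω => f ω * g ω|mG]) ω ∂P :=
        (integral_condExp hm).symm
    _ = ∫ ω, f ω * (P[g|mG]) ω ∂P := integral_congr_ae h

/-- L² of bounded * L² -/
lemma memℒp_bd_mul {c : ℝ} {a f : Ω → ℝ} (ha : AEStronglyMeasurable a P)
    (hc : ∀ ω, |a ω| ≤ c) (hf : MemLp f 2 P) :
    MemLp (fun ω => a ω * f ω) 2 P := by
  refine MemLp.of_le_mul (c := c) hf (ha.mul hf.1) (Filter.Eventually.of_forall fun ω => ?_)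
  simp only [Real.norm_eq_abs, abs_mul]
  exact mul_le_mul_of_nonneg_right (hc ω) (abs_nonneg _)

/-- square-integrability of w from conditional second moment -/
lemma w_memℒp {mG : MeasurableSpace Ω} (hm : mG ≤ m0) {w : Ω → ℝ}
    (hw : AEStronglyMeasurable[m0] w P)
    (h1 : P[fun ω => w ω ^ 2|mG] =ᵐ[P] fun _ => (1 : ℝ)) : MemLp w 2 P := by
  rw [memLp_two_iff_integrable_sq hw]
  by_contra hint
  have h0 : P[fun ω => w ω ^ 2|mG] = 0 := condExp_of_not_integrable hint
  rw [h0] at h1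
  obtain ⟨ω, hω⟩ := h1.exists
  simp at hω

lemma comp_meas {mG : MeasurableSpace Ω} {n' : ℕ} {f : Ω → Vec n'} (hf : Measurable[mG] f)
    (i : Fin n') : Measurable[mG] (fun ω => f ω i) :=
  ((EuclideanSpace.proj (𝕜 := ℝ) i).continuous.measurable).comp hf

lemma comp_memℒp {n' : ℕ} {f : Ω → Vec n'} (hf : MemLp f 2 P) (i : Fin n') :
    MemLp (fun ω => f ω i) 2 P :=
  (EuclideanSpace.proj (𝕜 := ℝ) i).comp_memLp' hf

lemma smul_int {n' : ℕ} {a : Ω → ℝ} {φ : Ω → Vec n'} (ha : MemLp a 2 P) (hφ : MemLp φ 2 P) :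
    Integrable (fun ω => a ω • φ ω) P := by
  refine Integrable.mono' (ha.integrable_sq.add hφ.norm.integrable_sq) (ha.1.smul hφ.1)
    (Filter.Eventually.of_forall fun ω => ?_)
  show ‖a ω • φ ω‖ ≤ a ω ^ 2 + ‖φ ω‖ ^ 2
  have h1 : ‖a ω • φ ω‖ = |a ω| * ‖φ ω‖ := by simp [norm_smul, Real.norm_eq_abs]
  rw [h1]
  nlinarith [abs_nonneg (a ω), norm_nonneg (φ ω), sq_abs (a ω), sq_nonneg (|a ω| - ‖φ ω‖)]

lemma mulVec_meas {mG : MeasurableSpace Ω} {n' m' : ℕ} {Am : Ω → Matrix (Fin n') (Fin m') ℝ}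
    {φ : Ω → Fin m' → ℝ}
    (hA : ∀ i j, Measurable[mG] fun ω => Am ω i j)
    (hφ : ∀ j, Measurable[mG] fun ω => φ ω j) (i : Fin n') :
    Measurable[mG] (fun ω => (Am ω).mulVec (φ ω) i) := by
  have h : (fun ω => (Am ω).mulVec (φ ω) i) = fun ω => ∑ j, Am ω i j * φ ω j := rfl
  rw [h]
  exact Finset.measurable_sum _ fun j _ => (hA i j).mul (hφ j)

lemma mulVec_memℒp {n' m' : ℕ} {Am : Ω → Matrix (Fin n') (Fin m') ℝ} {φ : Ω → Fin m' → ℝ} {c : ℝ}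
    (hbd : ∀ ω i j, |Am ω i j| ≤ c) (hAm : ∀ i j, AEStronglyMeasurable (fun ω => Am ω i j) P)
    (hφ : ∀ j, MemLp (fun ω => φ ω j) 2 P) (i : Fin n') :
    MemLp (fun ω => (Am ω).mulVec (φ ω) i) 2 P := by
  have h : (fun ω => (Am ω).mulVec (φ ω) i) = fun ω => ∑ j, Am ω i j * φ ω j := rfl
  rw [h]
  exact memLp_finset_sum _ fun j _ => memℒp_bd_mul (hAm i j) (fun ω => hbd ω i j) (hφ j)

lemma duality_pointwise {n m : ℕ} (A C Q' : Matrix (Fin n) (Fin n) ℝ)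
    (B D : Matrix (Fin n) (Fin m) ℝ) (dd yp zp xb' ybk : Fin n → ℝ) (v : Fin m → ℝ)
    (hy : ybk = Aᵀ.mulVec yp + Cᵀ.mulVec zp + Q'.mulVec xb') :
    (A.mulVec dd + B.mulVec v) ⬝ᵥ yp + (C.mulVec dd + D.mulVec v) ⬝ᵥ zp
      = dd ⬝ᵥ ybk + ((Bᵀ.mulVec yp + Dᵀ.mulVec zp) ⬝ᵥ v - Q'.mulVec xb' ⬝ᵥ dd) := by
  subst hy
  rw [add_dotProduct, add_dotProduct, add_dotProduct,
    dotProduct_add, dotProduct_add,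
    Matrix.dotProduct_mulVec dd Aᵀ yp, Matrix.dotProduct_mulVec dd Cᵀ zp,
    Matrix.dotProduct_mulVec dd Q' xb',
    Matrix.vecMul_transpose, Matrix.vecMul_transpose,
    show Bᵀ.mulVec yp ⬝ᵥ v = B.mulVec v ⬝ᵥ yp by
      rw [dotProduct_comm, Matrix.dotProduct_mulVec v Bᵀ yp, Matrix.vecMul_transpose],
    show Dᵀ.mulVec zp ⬝ᵥ v = D.mulVec v ⬝ᵥ zp by
      rw [dotProduct_comm, Matrix.dotProduct_mulVec v Dᵀ zp, Matrix.vecMul_transpose],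
    show Q'.mulVec xb' ⬝ᵥ dd = dd ᵥ* Q' ⬝ᵥ xb' by
      rw [dotProduct_comm, Matrix.dotProduct_mulVec dd Q' xb']]
  ring

end Stmt16Aux

/-- key duality computation in the forward LQ verification.  With
`(x̄, ȳ, ū)` solving the Hamiltonian system and `(x, u)` any admissible state-control
pair with the same forward dynamics,
`E[⟨Mξ̄, ξ−ξ̄⟩ + ⟨Gx̄_N, x_N−x̄_N⟩]
  = Σ_{k<N} E[⟨Bᵀ_k ȳ'_{k+1} + Dᵀ_k z̄'_{k+1}, u_k−ū_k⟩ − ⟨Q_k x̄_k, x_k−x̄_k⟩]`.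
`G k` plays the role of `F_{k-1}`. -/
theorem stmt16 (n m N : ℕ)
    {Ω : Type} [m0 : MeasurableSpace Ω] (P : Measure Ω) [IsProbabilityMeasure P]
    (G : ℕ → MeasurableSpace Ω) (hGmono : Monotone G) (hGle : ∀ k, G k ≤ m0)
    (w : ℕ → Ω → ℝ)
    (hwmeas : ∀ k, Measurable[G (k + 1)] (w k))
    (hw0 : ∀ k, P[w k | G k] =ᵐ[P] 0)
    (hw1 : ∀ k, P[fun ω => w k ω ^ 2 | G k] =ᵐ[P] 1)
    (A Cm : ℕ → Ω → Matrix (Fin n) (Fin n) ℝ)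
    (B D : ℕ → Ω → Matrix (Fin n) (Fin m) ℝ)
    (Q : ℕ → Ω → Matrix (Fin n) (Fin n) ℝ)
    (M : Matrix (Fin n) (Fin n) ℝ) (Gm : Ω → Matrix (Fin n) (Fin n) ℝ)
    (bc σc : ℕ → Ω → Vec n)
    (hAmeas : ∀ k i j, Measurable[G k] (fun ω => A k ω i j))
    (hCmmeas : ∀ k i j, Measurable[G k] (fun ω => Cm k ω i j))
    (hBmeas : ∀ k i j, Measurable[G k] (fun ω => B k ω i j))
    (hDmeas : ∀ k i j, Measurable[G k] (fun ω => D k ω i j))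
    (hQmeas : ∀ k i j, Measurable[G k] (fun ω => Q k ω i j))
    (hGmmeas : ∀ i j, Measurable[G N] (fun ω => Gm ω i j))
    (hAbd : ∃ c, ∀ k ω i j, |A k ω i j| ≤ c) (hCmbd : ∃ c, ∀ k ω i j, |Cm k ω i j| ≤ c)
    (hBbd : ∃ c, ∀ k ω i j, |B k ω i j| ≤ c) (hDbd : ∃ c, ∀ k ω i j, |D k ω i j| ≤ c)
    (hQbd : ∃ c, ∀ k ω i j, |Q k ω i j| ≤ c) (hGmbd : ∃ c, ∀ ω i j, |Gm ω i j| ≤ c)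
    (hbL2 : ∀ k, Measurable[G k] (bc k) ∧ MemLp (bc k) 2 P)
    (hσL2 : ∀ k, Measurable[G k] (σc k) ∧ MemLp (σc k) 2 P)
    (hM : M.PosDef)
    -- the admissible pair (ξ, u, x)
    (ξ : Vec n) (u : ℕ → Ω → Vec m) (x : ℕ → Ω → Vec n)
    (hxad : ∀ k, k ≤ N → Measurable[G k] (x k) ∧ MemLp (x k) 2 P)
    (huad : ∀ k, k < N → Measurable[G k] (u k) ∧ MemLp (u k) 2 P)
    (hx0 : x 0 = fun _ => ξ)
    (hfwd : ∀ k, k < N → ∀ᵐ ω ∂P, x (k + 1) ω =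
      ev ((A k ω).mulVec (x k ω)) + ev ((B k ω).mulVec (u k ω)) + bc k ω
      + w k ω • (ev ((Cm k ω).mulVec (x k ω)) + ev ((D k ω).mulVec (u k ω)) + σc k ω))
    -- the Hamiltonian solution (ξ̄, ū, x̄, ȳ)
    (ξb : Vec n) (ub : ℕ → Ω → Vec m) (xb yb : ℕ → Ω → Vec n)
    (hxbad : ∀ k, k ≤ N → Measurable[G k] (xb k) ∧ MemLp (xb k) 2 P)
    (hubad : ∀ k, k < N → Measurable[G k] (ub k) ∧ MemLp (ub k) 2 P)
    (hybad : ∀ k, k ≤ N → Measurable[G k] (yb k) ∧ MemLp (yb k) 2 P)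
    (hxb0 : xb 0 = fun _ => ξb)
    (hfwdb : ∀ k, k < N → ∀ᵐ ω ∂P, xb (k + 1) ω =
      ev ((A k ω).mulVec (xb k ω)) + ev ((B k ω).mulVec (ub k ω)) + bc k ω
      + w k ω • (ev ((Cm k ω).mulVec (xb k ω)) + ev ((D k ω).mulVec (ub k ω)) + σc k ω))
    (hinit : ∀ᵐ ω ∂P, xb 0 ω = -ev (M⁻¹.mulVec (yb 0 ω)))
    (hbwd : ∀ k, k < N → ∀ᵐ ω ∂P, yb k ω =
      ev ((A k ω)ᵀ.mulVec ((P[yb (k + 1) | G k]) ω))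
      + ev ((Cm k ω)ᵀ.mulVec ((P[fun ω' => w k ω' • yb (k + 1) ω' | G k]) ω))
      + ev ((Q k ω).mulVec (xb k ω)))
    (hterm : ∀ᵐ ω ∂P, yb N ω = ev ((Gm ω).mulVec (xb N ω))) :
    ∫ ω, (M.mulVec (xb 0 ω) ⬝ᵥ (x 0 ω - xb 0 ω)
        + (Gm ω).mulVec (xb N ω) ⬝ᵥ (x N ω - xb N ω)) ∂P =
      ∑ k ∈ Finset.range N,
        ∫ ω, ((ev ((B k ω)ᵀ.mulVec ((P[yb (k + 1) | G k]) ω))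
              + ev ((D k ω)ᵀ.mulVec ((P[fun ω' => w k ω' • yb (k + 1) ω' | G k]) ω)))
                ⬝ᵥ (u k ω - ub k ω)
            - (Q k ω).mulVec (xb k ω) ⬝ᵥ (x k ω - xb k ω)) ∂P := by
  classical
  obtain ⟨cA, hcA⟩ := hAbd
  obtain ⟨cC, hcC⟩ := hCmbd
  obtain ⟨cB, hcB⟩ := hBbd
  obtain ⟨cD, hcD⟩ := hDbd
  set d : ℕ → Ω → Fin n → ℝ := fun k ω i => x k ω i - xb k ω i with hd_def
  set vv : ℕ → Ω → Fin m → ℝ := fun k ω j => u k ω j - ub k ω j with hvv_def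
  have hdm : ∀ k, k ≤ N → ∀ i, Measurable[G k] (fun ω => d k ω i) := fun k hk i =>
    (Stmt16Aux.comp_meas (hxad k hk).1 i).sub (Stmt16Aux.comp_meas (hxbad k hk).1 i)
  have hdL2 : ∀ k, k ≤ N → ∀ i, MemLp (fun ω => d k ω i) 2 P := fun k hk i =>
    (Stmt16Aux.comp_memℒp (hxad k hk).2 i).sub (Stmt16Aux.comp_memℒp (hxbad k hk).2 i)
  have hvm : ∀ k, k < N → ∀ j, Measurable[G k] (fun ω => vv k ω j) := fun k hk j =>
    (Stmt16Aux.comp_meas (huad k hk).1 j).sub (Stmt16Aux.comp_meas (hubad k hk).1 j)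
  have hvL2 : ∀ k, k < N → ∀ j, MemLp (fun ω => vv k ω j) 2 P := fun k hk j =>
    (Stmt16Aux.comp_memℒp (huad k hk).2 j).sub (Stmt16Aux.comp_memℒp (hubad k hk).2 j)
  have hyL2 : ∀ k, k ≤ N → ∀ i, MemLp (fun ω => yb k ω i) 2 P := fun k hk i =>
    Stmt16Aux.comp_memℒp (hybad k hk).2 i
  have hwSM : ∀ k, AEStronglyMeasurable (w k) P := fun k =>
    (((hwmeas k).mono (hGle (k + 1)) le_rfl)).aestronglyMeasurable
  have hwL2 : ∀ k, MemLp (w k) 2 P := fun k => Stmt16Aux.w_memℒp (hGle k) (hwSM k) (hw1 k)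
  have dyb_int : ∀ k, k ≤ N → Integrable (fun ω => d k ω ⬝ᵥ yb k ω) P := by
    intro k hk
    exact integrable_finset_sum _ fun i _ => Stmt16Aux.int_mul (hdL2 k hk i) (hyL2 k hk i)
  have step : ∀ k, k < N →
      (∫ ω, d (k + 1) ω ⬝ᵥ yb (k + 1) ω ∂P) = (∫ ω, d k ω ⬝ᵥ yb k ω ∂P)
        + ∫ ω, ((ev ((B k ω)ᵀ.mulVec ((P[yb (k + 1) | G k]) ω))
              + ev ((D k ω)ᵀ.mulVec ((P[fun ω' => w k ω' • yb (k + 1) ω' | G k]) ω)))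
                ⬝ᵥ (u k ω - ub k ω)
            - (Q k ω).mulVec (xb k ω) ⬝ᵥ (x k ω - xb k ω)) ∂P := by
    intro k hk
    have hkN : k ≤ N := hk.le
    have hk1N : k + 1 ≤ N := hk
    set yp : Ω → Vec n := P[yb (k + 1) | G k] with hyp_def
    set zp : Ω → Vec n := P[fun ω' => w k ω' • yb (k + 1) ω' | G k] with hzp_def
    set f : Ω → Fin n → ℝ := fun ω => (A k ω).mulVec (d k ω) + (B k ω).mulVec (vv k ω)
      with hf_def
    set g : Ω → Fin n → ℝ := fun ω => (Cm k ω).mulVec (d k ω) + (D k ω).mulVec (vv k ω)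
      with hg_def
    have hfm : ∀ i, StronglyMeasurable[G k] (fun ω => f ω i) := fun i =>
      ((Stmt16Aux.mulVec_meas (hAmeas k) (hdm k hkN) i).add
        (Stmt16Aux.mulVec_meas (hBmeas k) (hvm k hk) i)).stronglyMeasurable
    have hgm : ∀ i, StronglyMeasurable[G k] (fun ω => g ω i) := fun i =>
      ((Stmt16Aux.mulVec_meas (hCmmeas k) (hdm k hkN) i).add
        (Stmt16Aux.mulVec_meas (hDmeas k) (hvm k hk) i)).stronglyMeasurable
    have hfL2 : ∀ i, MemLp (fun ω => f ω i) 2 P := fun i =>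
      (Stmt16Aux.mulVec_memℒp (fun ω i j => hcA k ω i j)
        (fun i j => ((hAmeas k i j).mono (hGle k) le_rfl).aestronglyMeasurable)
        (hdL2 k hkN) i).add
      (Stmt16Aux.mulVec_memℒp (fun ω i j => hcB k ω i j)
        (fun i j => ((hBmeas k i j).mono (hGle k) le_rfl).aestronglyMeasurable)
        (hvL2 k hk) i)
    have hgL2 : ∀ i, MemLp (fun ω => g ω i) 2 P := fun i =>
      (Stmt16Aux.mulVec_memℒp (fun ω i j => hcC k ω i j)
        (fun i j => ((hCmmeas k i j).mono (hGle k) le_rfl).aestronglyMeasurable)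
        (hdL2 k hkN) i).add
      (Stmt16Aux.mulVec_memℒp (fun ω i j => hcD k ω i j)
        (fun i j => ((hDmeas k i j).mono (hGle k) le_rfl).aestronglyMeasurable)
        (hvL2 k hk) i)
    have hy'L2 : ∀ i, MemLp (fun ω => yb (k + 1) ω i) 2 P := hyL2 (k + 1) hk1N
    have hy'int : ∀ i, Integrable (fun ω => yb (k + 1) ω i) P := fun i =>
      (hy'L2 i).integrable one_le_two
    have hybvec_int : Integrable (yb (k + 1)) P := (hybad (k + 1) hk1N).2.integrable one_le_two
    have hwyvec_int : Integrable (fun ω => w k ω • yb (k + 1) ω) P :=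
      Stmt16Aux.smul_int (hwL2 k) (hybad (k + 1) hk1N).2
    have hwy_int : ∀ i, Integrable (fun ω => w k ω * yb (k + 1) ω i) P := fun i =>
      Stmt16Aux.int_mul (hwL2 k) (hy'L2 i)
    have int_fy : ∀ i, Integrable (fun ω => f ω i * yb (k + 1) ω i) P := fun i =>
      Stmt16Aux.int_mul (hfL2 i) (hy'L2 i)
    have int_dy : ∀ i, Integrable (fun ω => d (k + 1) ω i * yb (k + 1) ω i) P := fun i =>
      Stmt16Aux.int_mul (hdL2 (k + 1) hk1N i) (hy'L2 i)
    have hdyn : ∀ᵐ ω ∂P, ∀ i, d (k + 1) ω i = f ω i + w k ω * g ω i := by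
      filter_upwards [hfwd k hk, hfwdb k hk] with ω h1 h2 i
      have e1 : x (k + 1) ω i = (A k ω).mulVec (x k ω) i + (B k ω).mulVec (u k ω) i + bc k ω i
          + w k ω * ((Cm k ω).mulVec (x k ω) i + (D k ω).mulVec (u k ω) i + σc k ω i) := by
        rw [h1]; rfl
      have e2 : xb (k + 1) ω i = (A k ω).mulVec (xb k ω) i + (B k ω).mulVec (ub k ω) i
          + bc k ω i
          + w k ω * ((Cm k ω).mulVec (xb k ω) i + (D k ω).mulVec (ub k ω) i + σc k ω i) := by
        rw [h2]; rfl
      have hsub : ∀ {m' : ℕ} (Mx : Matrix (Fin n) (Fin m') ℝ) (a b : Fin m' → ℝ),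
          Mx.mulVec (fun j => a j - b j) i = Mx.mulVec a i - Mx.mulVec b i := by
        intro m' Mx a b
        simp [Matrix.mulVec, dotProduct, ← Finset.sum_sub_distrib, mul_sub]
      have hfi : f ω i = ((A k ω).mulVec (x k ω) i - (A k ω).mulVec (xb k ω) i)
          + ((B k ω).mulVec (u k ω) i - (B k ω).mulVec (ub k ω) i) := by
        rw [← hsub, ← hsub]; rfl
      have hgi : g ω i = ((Cm k ω).mulVec (x k ω) i - (Cm k ω).mulVec (xb k ω) i)
          + ((D k ω).mulVec (u k ω) i - (D k ω).mulVec (ub k ω) i) := by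
        rw [← hsub, ← hsub]; rfl
      show x (k + 1) ω i - xb (k + 1) ω i = f ω i + w k ω * g ω i
      rw [e1, e2, hfi, hgi]; ring
    have int_gwy : ∀ i, Integrable (fun ω => g ω i * (w k ω * yb (k + 1) ω i)) P := by
      intro i
      refine ((int_dy i).sub (int_fy i)).congr ?_
      filter_upwards [hdyn] with ω hω
      show d (k + 1) ω i * yb (k + 1) ω i - f ω i * yb (k + 1) ω i
          = g ω i * (w k ω * yb (k + 1) ω i)
      rw [hω i]; ring
    have cyp : ∀ i, (fun ω => yp ω i) =ᵐ[P] P[fun ω => yb (k + 1) ω i | G k] := fun i =>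
      Stmt16Aux.condexp_proj (hGle k) hybvec_int i
    have czp : ∀ i, (fun ω => zp ω i) =ᵐ[P] P[fun ω => w k ω * yb (k + 1) ω i | G k] := fun i =>
      Stmt16Aux.condexp_proj (hGle k) hwyvec_int i
    have c1 : ∀ i, P[fun ω => d (k + 1) ω i * yb (k + 1) ω i | G k]
        =ᵐ[P] fun ω => f ω i * yp ω i + g ω i * zp ω i := by
      intro i
      have e1 : (fun ω => d (k + 1) ω i * yb (k + 1) ω i)
          =ᵐ[P] fun ω => f ω i * yb (k + 1) ω i + g ω i * (w k ω * yb (k + 1) ω i) := by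
        filter_upwards [hdyn] with ω hω
        rw [hω i]; ring
      have p1 : P[fun ω => f ω i * yb (k + 1) ω i | G k] =ᵐ[P] fun ω => f ω i * yp ω i := by
        refine (condExp_mul_of_stronglyMeasurable_left (μ := P) (hfm i) (int_fy i) (hy'int i)).trans ?_
        filter_upwards [cyp i] with ω hω
        show f ω i * (P[fun ω => yb (k + 1) ω i | G k]) ω = f ω i * yp ω i
        rw [← hω]
      have p2 : P[fun ω => g ω i * (w k ω * yb (k + 1) ω i) | G k]
          =ᵐ[P] fun ω => g ω i * zp ω i := by
        refine (condExp_mul_of_stronglyMeasurable_left (μ := P) (hgm i) (int_gwy i) (hwy_int i)).trans ?_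
        filter_upwards [czp i] with ω hω
        show g ω i * (P[fun ω => w k ω * yb (k + 1) ω i | G k]) ω = g ω i * zp ω i
        rw [← hω]
      exact (condExp_congr_ae e1).trans
        (((condExp_add (int_fy i) (int_gwy i) (G k)).trans (p1.add p2)))
    have int_cond : ∀ i, Integrable (fun ω => f ω i * yp ω i + g ω i * zp ω i) P := fun i =>
      (integrable_condExp).congr (c1 i)
    have key_ae : (fun ω => ∑ i, (f ω i * yp ω i + g ω i * zp ω i))
        =ᵐ[P] fun ω => d k ω ⬝ᵥ yb k ω
          + ((ev ((B k ω)ᵀ.mulVec (yp ω)) + ev ((D k ω)ᵀ.mulVec (zp ω))) ⬝ᵥ (u k ω - ub k ω)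
            - (Q k ω).mulVec (xb k ω) ⬝ᵥ (x k ω - xb k ω)) := by
      filter_upwards [hbwd k hk] with ω hω
      have hlhs : (∑ i, (f ω i * yp ω i + g ω i * zp ω i)) = f ω ⬝ᵥ yp ω + g ω ⬝ᵥ zp ω := by
        rw [Finset.sum_add_distrib]; rfl
      rw [hlhs]
      exact Stmt16Aux.duality_pointwise (A k ω) (Cm k ω) (Q k ω) (B k ω) (D k ω)
        (d k ω) (yp ω) (zp ω) (xb k ω) (yb k ω) (vv k ω) (by rw [hω]; rfl)
    have int_R : Integrable (fun ω =>
        ((ev ((B k ω)ᵀ.mulVec (yp ω)) + ev ((D k ω)ᵀ.mulVec (zp ω))) ⬝ᵥ (u k ω - ub k ω)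
          - (Q k ω).mulVec (xb k ω) ⬝ᵥ (x k ω - xb k ω))) P := by
      refine ((integrable_finset_sum Finset.univ fun i _ => int_cond i).sub
        (dyb_int k hkN)).congr ?_
      filter_upwards [key_ae] with ω hω
      simp only [Pi.sub_apply]
      rw [hω]; ring
    calc ∫ ω, d (k + 1) ω ⬝ᵥ yb (k + 1) ω ∂P
        = ∑ i, ∫ ω, d (k + 1) ω i * yb (k + 1) ω i ∂P :=
          integral_finset_sum Finset.univ fun i _ => int_dy i
      _ = ∑ i, ∫ ω, (P[fun ω => d (k + 1) ω i * yb (k + 1) ω i | G k]) ω ∂P :=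
          Finset.sum_congr rfl fun i _ => (integral_condExp (hGle k)).symm
      _ = ∑ i, ∫ ω, (f ω i * yp ω i + g ω i * zp ω i) ∂P :=
          Finset.sum_congr rfl fun i _ => integral_congr_ae (c1 i)
      _ = ∫ ω, ∑ i, (f ω i * yp ω i + g ω i * zp ω i) ∂P :=
          (integral_finset_sum Finset.univ fun i _ => int_cond i).symm
      _ = ∫ ω, (d k ω ⬝ᵥ yb k ω
            + ((ev ((B k ω)ᵀ.mulVec (yp ω)) + ev ((D k ω)ᵀ.mulVec (zp ω))) ⬝ᵥ (u k ω - ub k ω)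
              - (Q k ω).mulVec (xb k ω) ⬝ᵥ (x k ω - xb k ω))) ∂P := integral_congr_ae key_ae
      _ = (∫ ω, d k ω ⬝ᵥ yb k ω ∂P)
          + ∫ ω, ((ev ((B k ω)ᵀ.mulVec (yp ω)) + ev ((D k ω)ᵀ.mulVec (zp ω)))
                ⬝ᵥ (u k ω - ub k ω)
              - (Q k ω).mulVec (xb k ω) ⬝ᵥ (x k ω - xb k ω)) ∂P :=
          integral_add (dyb_int k hkN) int_R
  have hend : (fun ω => M.mulVec (xb 0 ω) ⬝ᵥ (x 0 ω - xb 0 ω)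
      + (Gm ω).mulVec (xb N ω) ⬝ᵥ (x N ω - xb N ω))
      =ᵐ[P] fun ω => d N ω ⬝ᵥ yb N ω - d 0 ω ⬝ᵥ yb 0 ω := by
    filter_upwards [hinit, hterm] with ω h0 hN
    have hMx : M.mulVec (xb 0 ω) = fun i => -(yb 0 ω i) := by
      have h0' : (xb 0 ω : Fin n → ℝ) = -(M⁻¹.mulVec (yb 0 ω)) := by rw [h0]; rfl
      rw [h0', Matrix.mulVec_neg, Matrix.mulVec_mulVec,
        Matrix.mul_nonsing_inv _ (isUnit_iff_ne_zero.mpr hM.det_pos.ne'), Matrix.one_mulVec]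
      rfl
    have hGx : (Gm ω).mulVec (xb N ω) = (yb N ω : Fin n → ℝ) := by rw [hN]; rfl
    show M.mulVec (xb 0 ω) ⬝ᵥ (d 0 ω) + (Gm ω).mulVec (xb N ω) ⬝ᵥ (d N ω)
        = d N ω ⬝ᵥ yb N ω - d 0 ω ⬝ᵥ yb 0 ω
    rw [hMx, hGx, show (fun i => -(yb 0 ω i)) ⬝ᵥ d 0 ω = -((yb 0 ω : Fin n → ℝ) ⬝ᵥ d 0 ω) from
        neg_dotProduct _ _,
      dotProduct_comm (yb N ω : Fin n → ℝ) (d N ω),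
      dotProduct_comm (yb 0 ω : Fin n → ℝ) (d 0 ω)]
    ring
  calc ∫ ω, (M.mulVec (xb 0 ω) ⬝ᵥ (x 0 ω - xb 0 ω)
        + (Gm ω).mulVec (xb N ω) ⬝ᵥ (x N ω - xb N ω)) ∂P
      = ∫ ω, (d N ω ⬝ᵥ yb N ω - d 0 ω ⬝ᵥ yb 0 ω) ∂P := integral_congr_ae hend
    _ = (∫ ω, d N ω ⬝ᵥ yb N ω ∂P) - ∫ ω, d 0 ω ⬝ᵥ yb 0 ω ∂P :=
        integral_sub (dyb_int N le_rfl) (dyb_int 0 (Nat.zero_le N))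
    _ = ∑ k ∈ Finset.range N,
          ((∫ ω, d (k + 1) ω ⬝ᵥ yb (k + 1) ω ∂P) - ∫ ω, d k ω ⬝ᵥ yb k ω ∂P) :=
        (Finset.sum_range_sub (fun k => ∫ ω, d k ω ⬝ᵥ yb k ω ∂P) N).symm
    _ = ∑ k ∈ Finset.range N,
        ∫ ω, ((ev ((B k ω)ᵀ.mulVec ((P[yb (k + 1) | G k]) ω))
              + ev ((D k ω)ᵀ.mulVec ((P[fun ω' => w k ω' • yb (k + 1) ω' | G k]) ω)))
                ⬝ᵥ (u k ω - ub k ω)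
            - (Q k ω).mulVec (xb k ω) ⬝ᵥ (x k ω - xb k ω)) ∂P :=
        Finset.sum_congr rfl fun k hk => by
          rw [step k (Finset.mem_range.mp hk)]; ring
end
end
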